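/- arXiv:2010.15505 — 6 statements merged into one kernel-verified Lean document; each statement's English description precedes it below -/
import Mathlib

section
/- Constants relations for lower characteristic (1,0): with γ = Θ[0,0;1,0](0,0) and δ = Θ[0,1;1,0](0,0), one has θ[0,0;1,0](0,0) · θ[0,0;0,0](0,0) = γ² + δ² and θ[0,1;1,0](0,0) · θ[0,1;0,0](0,0) = 2γδ. -/
open Complex

/-- Genus-two theta function with real characteristics `a c b d`
(upper characteristics `a, c`, lower characteristics `b, d`),
moduli `τ₁ τ₂ τ₁₂` and complex arguments `x y`. -/
noncomputable def theta (τ₁ τ₂ τ₁₂ : ℂ) (a c b d : ℝ) (x y : ℂ) : ℂ :=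
  ∑' p : ℤ × ℤ,
    Complex.exp
      ((Real.pi : ℂ) * Complex.I *
          (τ₁ * ((p.1 : ℂ) + (a : ℂ) / 2) ^ 2 + τ₂ * ((p.2 : ℂ) + (c : ℂ) / 2) ^ 2 +
            2 * τ₁₂ * ((p.1 : ℂ) + (a : ℂ) / 2) * ((p.2 : ℂ) + (c : ℂ) / 2)) +
        2 * (Real.pi : ℂ) * Complex.I *
          (((p.1 : ℂ) + (a : ℂ) / 2) * (x + (b : ℂ) / 2) +
            ((p.2 : ℂ) + (c : ℂ) / 2) * (y + (d : ℂ) / 2)))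

/-- The same theta function with doubled moduli `2τ₁, 2τ₂, 2τ₁₂`. -/
noncomputable def Theta2 (τ₁ τ₂ τ₁₂ : ℂ) (a c b d : ℝ) (x y : ℂ) : ℂ :=
  theta (2 * τ₁) (2 * τ₂) (2 * τ₁₂) a c b d x y

/-! ### Auxiliary definitions and lemmas -/

/-- Normalized term of the genus-two theta series at the origin, with vanishing first upper
characteristic and vanishing second lower characteristic. -/
noncomputable def trm (t₁ t₂ t₁₂ : ℂ) (β b : ℝ) : ℤ × ℤ → ℂ := fun p =>
  Complex.exp ((Real.pi : ℂ) * I *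
      (t₁ * (p.1 : ℂ) ^ 2 + t₂ * ((p.2 : ℂ) + (β : ℂ)) ^ 2 +
        2 * t₁₂ * (p.1 : ℂ) * ((p.2 : ℂ) + (β : ℂ))) +
    (Real.pi : ℂ) * I * (b : ℂ) * (p.1 : ℂ))

lemma sum1d {c : ℝ} (hc : 0 < c) (α : ℝ) :
    Summable fun n : ℤ => Real.exp (-c * ((n : ℝ) + α) ^ 2) := by
  have hT : 0 < c / Real.pi := div_pos hc Real.pi_pos
  refine (summable_pow_mul_jacobiTheta₂_term_bound (c * |α| / Real.pi) hT 0).of_nonneg_of_le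
    (fun n => (Real.exp_pos _).le) (fun n => ?_)
  rw [pow_zero, one_mul]
  apply Real.exp_le_exp.mpr
  push_cast
  have e1 : Real.pi * (c / Real.pi * (n : ℝ) ^ 2) = c * (n : ℝ) ^ 2 := by
    field_simp
  have e2 : Real.pi * (2 * (c * |α| / Real.pi) * |(n : ℝ)|) = 2 * c * |α| * |(n : ℝ)| := by
    rw [show 2 * (c * |α| / Real.pi) * |(n : ℝ)| = 2 * c * |α| * |(n : ℝ)| / Real.pi by ring,
      mul_div_cancel₀ _ Real.pi_ne_zero]
  have key : -(α * (n : ℝ)) ≤ |α| * |(n : ℝ)| := by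
    calc -(α * (n : ℝ)) ≤ |α * (n : ℝ)| := neg_le_abs _
    _ = |α| * |(n : ℝ)| := abs_mul _ _
  nlinarith [mul_le_mul_of_nonneg_left key hc.le, mul_nonneg hc.le (sq_nonneg α)]

lemma trm_norm (t₁ t₂ t₁₂ : ℂ) (β b : ℝ) (p : ℤ × ℤ) :
    ‖trm t₁ t₂ t₁₂ β b p‖ = Real.exp (-Real.pi *
      (t₁.im * (p.1 : ℝ) ^ 2 + t₂.im * ((p.2 : ℝ) + β) ^ 2 +
        2 * t₁₂.im * (p.1 : ℝ) * ((p.2 : ℝ) + β))) := by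
  obtain ⟨m, n⟩ := p
  rw [trm, Complex.norm_exp]
  congr 1
  rw [show (Real.pi : ℂ) * I *
      (t₁ * ((m : ℤ) : ℂ) ^ 2 + t₂ * (((n : ℤ) : ℂ) + (β : ℂ)) ^ 2 +
        2 * t₁₂ * ((m : ℤ) : ℂ) * (((n : ℤ) : ℂ) + (β : ℂ))) +
      (Real.pi : ℂ) * I * (b : ℂ) * ((m : ℤ) : ℂ)
    = ((Real.pi * (m : ℝ) ^ 2 : ℝ) : ℂ) * t₁ * I +
      ((Real.pi * ((n : ℝ) + β) ^ 2 : ℝ) : ℂ) * t₂ * I +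
      ((2 * Real.pi * (m : ℝ) * ((n : ℝ) + β) : ℝ) : ℂ) * t₁₂ * I +
      ((Real.pi * b * (m : ℝ) : ℝ) : ℂ) * I from by push_cast; ring]
  simp only [Complex.add_re, Complex.mul_I_re, Complex.im_ofReal_mul, Complex.ofReal_im,
    neg_zero]
  ring

set_option maxHeartbeats 2000000 in
lemma trm_summable {t₁ t₂ t₁₂ : ℂ} (h1 : 0 < t₁.im) (h2 : 0 < t₂.im)
    (h : t₁₂.im ^ 2 < t₁.im * t₂.im) (β b : ℝ) :
    Summable fun p : ℤ × ℤ => ‖trm t₁ t₂ t₁₂ β b p‖ := by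
  obtain ⟨a1, ha1⟩ : ∃ x, t₁.im = x := ⟨_, rfl⟩
  obtain ⟨a2, ha2⟩ : ∃ x, t₂.im = x := ⟨_, rfl⟩
  obtain ⟨a12, ha12⟩ : ∃ x, t₁₂.im = x := ⟨_, rfl⟩
  rw [ha1] at h1 h; rw [ha2] at h2 h; rw [ha12] at h
  have hε1 : 0 < (a1 - a12 ^ 2 / a2) / 2 := by
    have : a12 ^ 2 / a2 < a1 := (div_lt_iff₀ h2).mpr (by nlinarith)
    linarith
  have hε2 : 0 < (a2 - a12 ^ 2 / a1) / 2 := by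
    have : a12 ^ 2 / a1 < a2 := (div_lt_iff₀ h1).mpr (by nlinarith)
    linarith
  have hq : ∀ u v : ℝ, (a1 - a12 ^ 2 / a2) / 2 * u ^ 2 + (a2 - a12 ^ 2 / a1) / 2 * v ^ 2 ≤
      a1 * u ^ 2 + a2 * v ^ 2 + 2 * a12 * u * v := by
    intro u v
    have k1 : (a1 - a12 ^ 2 / a2) * u ^ 2 ≤ a1 * u ^ 2 + a2 * v ^ 2 + 2 * a12 * u * v := by
      have h3 : a12 ^ 2 / a2 * u ^ 2 * a2 = a12 ^ 2 * u ^ 2 := by field_simp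
      nlinarith [sq_nonneg (a2 * v + a12 * u), h2]
    have k2 : (a2 - a12 ^ 2 / a1) * v ^ 2 ≤ a1 * u ^ 2 + a2 * v ^ 2 + 2 * a12 * u * v := by
      have h3 : a12 ^ 2 / a1 * v ^ 2 * a1 = a12 ^ 2 * v ^ 2 := by field_simp
      nlinarith [sq_nonneg (a1 * u + a12 * v), h1]
    linarith
  have hb1 : Summable fun m : ℤ =>
      Real.exp (-(Real.pi * ((a1 - a12 ^ 2 / a2) / 2)) * (m : ℝ) ^ 2) := by
    refine (sum1d (mul_pos Real.pi_pos hε1) 0).congr fun m => ?_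
    norm_num
  have hb2 : Summable fun n : ℤ =>
      Real.exp (-(Real.pi * ((a2 - a12 ^ 2 / a1) / 2)) * ((n : ℝ) + β) ^ 2) :=
    sum1d (mul_pos Real.pi_pos hε2) β
  have hbs : Summable fun p : ℤ × ℤ =>
      Real.exp (-(Real.pi * ((a1 - a12 ^ 2 / a2) / 2)) * (p.1 : ℝ) ^ 2) *
      Real.exp (-(Real.pi * ((a2 - a12 ^ 2 / a1) / 2)) * ((p.2 : ℝ) + β) ^ 2) :=
    hb1.mul_of_nonneg hb2 (fun _ => (Real.exp_pos _).le) (fun _ => (Real.exp_pos _).le)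
  refine hbs.of_nonneg_of_le (fun p => norm_nonneg _) (fun p => ?_)
  rw [trm_norm, ha1, ha2, ha12, ← Real.exp_add]
  apply Real.exp_le_exp.mpr
  nlinarith [hq ((p.1 : ℝ)) ((p.2 : ℝ) + β), Real.pi_pos]

/-- The index change `((εₘ, εₙ), ((r, s), (r', s'))) ↦ ((m, n), (m', n'))` with
`m = r + r' + εₘ`, `n = s + s' + εₙ`, `m' = r - r'`, `n' = s - s'`. -/
def mixE : (Bool × Bool) × ((ℤ × ℤ) × (ℤ × ℤ)) ≃ (ℤ × ℤ) × (ℤ × ℤ) where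
  toFun x :=
    ((x.2.1.1 + x.2.2.1 + (if x.1.1 then 1 else 0),
      x.2.1.2 + x.2.2.2 + (if x.1.2 then 1 else 0)),
     (x.2.1.1 - x.2.2.1, x.2.1.2 - x.2.2.2))
  invFun y :=
    ((decide ((y.1.1 + y.2.1) % 2 = 1), decide ((y.1.2 + y.2.2) % 2 = 1)),
     (((y.1.1 + y.2.1 - (y.1.1 + y.2.1) % 2) / 2, (y.1.2 + y.2.2 - (y.1.2 + y.2.2) % 2) / 2),
      ((y.1.1 - y.2.1 - (y.1.1 + y.2.1) % 2) / 2, (y.1.2 - y.2.2 - (y.1.2 + y.2.2) % 2) / 2)))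
  left_inv x := by
    obtain ⟨⟨bm, bn⟩, ⟨⟨r, s⟩, ⟨r', s'⟩⟩⟩ := x
    have i0 : (if (false = true) then (1:ℤ) else 0) = 0 := rfl
    have i1 : (if (true = true) then (1:ℤ) else 0) = 1 := rfl
    cases bm <;> cases bn <;>
      simp only [i0, i1, if_true, Prod.mk.injEq, decide_eq_true_eq,
        decide_eq_false_iff_not, true_and, and_true] <;> omega
  right_inv y := by
    obtain ⟨⟨m, n⟩, ⟨m', n'⟩⟩ := y
    simp only [Prod.mk.injEq, decide_eq_true_eq]
    split_ifs <;> omega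

lemma mixE_ff (r s r' s' : ℤ) :
    mixE ((false, false), ((r, s), (r', s'))) = ((r + r', s + s'), (r - r', s - s')) := by
  simp [mixE]
lemma mixE_ft (r s r' s' : ℤ) :
    mixE ((false, true), ((r, s), (r', s'))) = ((r + r', s + s' + 1), (r - r', s - s')) := by
  simp [mixE]
lemma mixE_tf (r s r' s' : ℤ) :
    mixE ((true, false), ((r, s), (r', s'))) = ((r + r' + 1, s + s'), (r - r', s - s')) := by
  simp [mixE]
lemma mixE_tt (r s r' s' : ℤ) :
    mixE ((true, true), ((r, s), (r', s'))) = ((r + r' + 1, s + s' + 1), (r - r', s - s')) := by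
  simp [mixE]

def inv0 : (ℤ × ℤ) × (ℤ × ℤ) ≃ (ℤ × ℤ) × (ℤ × ℤ) where
  toFun x := (x.1, (-1 - x.2.1, -x.2.2))
  invFun x := (x.1, (-1 - x.2.1, -x.2.2))
  left_inv x := by
    obtain ⟨⟨r, s⟩, ⟨r', s'⟩⟩ := x
    simp only [Prod.mk.injEq, true_and, and_true]; omega
  right_inv x := by
    obtain ⟨⟨r, s⟩, ⟨r', s'⟩⟩ := x
    simp only [Prod.mk.injEq, true_and, and_true]; omega

def inv1 : (ℤ × ℤ) × (ℤ × ℤ) ≃ (ℤ × ℤ) × (ℤ × ℤ) where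
  toFun x := (x.1, (-1 - x.2.1, -1 - x.2.2))
  invFun x := (x.1, (-1 - x.2.1, -1 - x.2.2))
  left_inv x := by
    obtain ⟨⟨r, s⟩, ⟨r', s'⟩⟩ := x
    simp only [Prod.mk.injEq, true_and, and_true]; omega
  right_inv x := by
    obtain ⟨⟨r, s⟩, ⟨r', s'⟩⟩ := x
    simp only [Prod.mk.injEq, true_and, and_true]; omega

lemma inv0_apply (r s r' s' : ℤ) :
    inv0 ((r, s), (r', s')) = ((r, s), (-1 - r', -s')) := rfl
lemma inv1_apply (r s r' s' : ℤ) :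
    inv1 ((r, s), (r', s')) = ((r, s), (-1 - r', -1 - s')) := rfl

lemma tsum_eq_zero_of_invol {ι : Type*} (e : ι ≃ ι) (f : ι → ℂ)
    (h : ∀ x, f (e x) = -f x) : ∑' x, f x = 0 := by
  have h1 : ∑' x, f (e x) = ∑' x, f x := e.tsum_eq f
  rw [tsum_congr h, tsum_neg] at h1
  linear_combination -h1 / 2

lemma exp_eq_neg_exp (X Y : ℂ) (k : ℤ)
    (h : X = Y + (2 * (k : ℂ) + 1) * ((Real.pi : ℂ) * I)) :
    Complex.exp X = -Complex.exp Y := by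
  rw [h, Complex.exp_add,
    show (2 * (k : ℂ) + 1) * ((Real.pi : ℂ) * I)
        = (k : ℂ) * (2 * (Real.pi : ℂ) * I) + (Real.pi : ℂ) * I from by ring,
    Complex.exp_add, Complex.exp_int_mul_two_pi_mul_I, Complex.exp_pi_mul_I]
  ring

lemma theta_eq0 (t₁ t₂ t₁₂ : ℂ) (b : ℝ) :
    theta t₁ t₂ t₁₂ 0 0 b 0 0 0 = ∑' p : ℤ × ℤ, trm t₁ t₂ t₁₂ 0 b p := by
  unfold theta trm
  refine tsum_congr fun p => ?_
  congr 1
  push_cast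
  ring

lemma theta_eq1 (t₁ t₂ t₁₂ : ℂ) (b : ℝ) :
    theta t₁ t₂ t₁₂ 0 1 b 0 0 0 = ∑' p : ℤ × ℤ, trm t₁ t₂ t₁₂ (1/2) b p := by
  unfold theta trm
  refine tsum_congr fun p => ?_
  congr 1
  push_cast
  ring

lemma trm_shift (t₁ t₂ t₁₂ : ℂ) (b : ℝ) :
    (∑' p : ℤ × ℤ, trm t₁ t₂ t₁₂ 1 b p) = ∑' p : ℤ × ℤ, trm t₁ t₂ t₁₂ 0 b p := by
  rw [← (Equiv.prodCongr (Equiv.refl ℤ) (Equiv.addRight (1:ℤ))).tsum_eq (trm t₁ t₂ t₁₂ 0 b)]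
  refine tsum_congr fun p => ?_
  obtain ⟨r, s⟩ := p
  simp only [Equiv.prodCongr_apply, Equiv.coe_refl, Equiv.coe_addRight, Prod.map, id_eq]
  simp only [trm]
  congr 1
  push_cast
  ring

lemma double_im (z : ℂ) : (2 * z).im = 2 * z.im := by simp [Complex.mul_im]

section parts

variable {τ₁ τ₂ τ₁₂ : ℂ} (hτ₁ : 0 < τ₁.im) (hτ₂ : 0 < τ₂.im)
  (hτ : τ₁₂.im ^ 2 < τ₁.im * τ₂.im)

include hτ₁ hτ₂ hτ

lemma part1 :
    (∑' p : ℤ × ℤ, trm τ₁ τ₂ τ₁₂ 0 1 p) * (∑' p : ℤ × ℤ, trm τ₁ τ₂ τ₁₂ 0 0 p)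
      = (∑' p : ℤ × ℤ, trm (2*τ₁) (2*τ₂) (2*τ₁₂) 0 1 p) ^ 2
        + (∑' p : ℤ × ℤ, trm (2*τ₁) (2*τ₂) (2*τ₁₂) (1/2) 1 p) ^ 2 := by
  have H1 : 0 < (2*τ₁).im := by rw [double_im]; linarith
  have H2 : 0 < (2*τ₂).im := by rw [double_im]; linarith
  have H : (2*τ₁₂).im ^ 2 < (2*τ₁).im * (2*τ₂).im := by
    rw [double_im, double_im, double_im]; nlinarith
  have hA := trm_summable hτ₁ hτ₂ hτ 0 1
  have hB := trm_summable hτ₁ hτ₂ hτ 0 0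
  have hC := trm_summable H1 H2 H 0 1
  have hD := trm_summable H1 H2 H (1/2) 1
  have hF : Summable (fun k : (ℤ×ℤ) × (ℤ×ℤ) =>
      trm τ₁ τ₂ τ₁₂ 0 1 k.1 * trm τ₁ τ₂ τ₁₂ 0 0 k.2) :=
    summable_mul_of_summable_norm hA hB
  rw [tsum_mul_tsum_of_summable_norm hA hB,
    ← mixE.tsum_eq (fun k : (ℤ×ℤ) × (ℤ×ℤ) => trm τ₁ τ₂ τ₁₂ 0 1 k.1 * trm τ₁ τ₂ τ₁₂ 0 0 k.2)]
  have hG : Summable (fun c : (Bool × Bool) × ((ℤ×ℤ) × (ℤ×ℤ)) =>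
      trm τ₁ τ₂ τ₁₂ 0 1 (mixE c).1 * trm τ₁ τ₂ τ₁₂ 0 0 (mixE c).2) :=
    mixE.summable_iff.mpr hF
  rw [Summable.tsum_prod hG, tsum_fintype, Fintype.sum_prod_type]
  simp only [Fintype.sum_bool]
  have Ztt : (∑' c : (ℤ×ℤ) × (ℤ×ℤ),
      trm τ₁ τ₂ τ₁₂ 0 1 (mixE ((true, true), c)).1 *
        trm τ₁ τ₂ τ₁₂ 0 0 (mixE ((true, true), c)).2) = 0 := by
    refine tsum_eq_zero_of_invol inv1 _ fun x => ?_
    obtain ⟨⟨r, s⟩, ⟨r', s'⟩⟩ := x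
    rw [inv1_apply, mixE_tt, mixE_tt]
    dsimp only
    simp only [trm]
    rw [← Complex.exp_add, ← Complex.exp_add]
    exact exp_eq_neg_exp _ _ (-1 - r') (by push_cast; ring)
  have Ztf : (∑' c : (ℤ×ℤ) × (ℤ×ℤ),
      trm τ₁ τ₂ τ₁₂ 0 1 (mixE ((true, false), c)).1 *
        trm τ₁ τ₂ τ₁₂ 0 0 (mixE ((true, false), c)).2) = 0 := by
    refine tsum_eq_zero_of_invol inv0 _ fun x => ?_
    obtain ⟨⟨r, s⟩, ⟨r', s'⟩⟩ := x
    rw [inv0_apply, mixE_tf, mixE_tf]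
    dsimp only
    simp only [trm]
    rw [← Complex.exp_add, ← Complex.exp_add]
    exact exp_eq_neg_exp _ _ (-1 - r') (by push_cast; ring)
  have Eff : (∑' c : (ℤ×ℤ) × (ℤ×ℤ),
      trm τ₁ τ₂ τ₁₂ 0 1 (mixE ((false, false), c)).1 *
        trm τ₁ τ₂ τ₁₂ 0 0 (mixE ((false, false), c)).2)
      = (∑' p : ℤ × ℤ, trm (2*τ₁) (2*τ₂) (2*τ₁₂) 0 1 p) *
        (∑' p : ℤ × ℤ, trm (2*τ₁) (2*τ₂) (2*τ₁₂) 0 1 p) := by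
    rw [tsum_mul_tsum_of_summable_norm hC hC]
    refine tsum_congr fun x => ?_
    obtain ⟨⟨r, s⟩, ⟨r', s'⟩⟩ := x
    rw [mixE_ff]
    dsimp only
    simp only [trm]
    rw [← Complex.exp_add, ← Complex.exp_add]
    congr 1
    push_cast
    ring
  have Eft : (∑' c : (ℤ×ℤ) × (ℤ×ℤ),
      trm τ₁ τ₂ τ₁₂ 0 1 (mixE ((false, true), c)).1 *
        trm τ₁ τ₂ τ₁₂ 0 0 (mixE ((false, true), c)).2)
      = (∑' p : ℤ × ℤ, trm (2*τ₁) (2*τ₂) (2*τ₁₂) (1/2) 1 p) *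
        (∑' p : ℤ × ℤ, trm (2*τ₁) (2*τ₂) (2*τ₁₂) (1/2) 1 p) := by
    rw [tsum_mul_tsum_of_summable_norm hD hD]
    refine tsum_congr fun x => ?_
    obtain ⟨⟨r, s⟩, ⟨r', s'⟩⟩ := x
    rw [mixE_ft]
    dsimp only
    simp only [trm]
    rw [← Complex.exp_add, ← Complex.exp_add]
    congr 1
    push_cast
    ring
  rw [Ztt, Ztf, Eff, Eft]
  ring

lemma part2 :
    (∑' p : ℤ × ℤ, trm τ₁ τ₂ τ₁₂ (1/2) 1 p) * (∑' p : ℤ × ℤ, trm τ₁ τ₂ τ₁₂ (1/2) 0 p)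
      = 2 * (∑' p : ℤ × ℤ, trm (2*τ₁) (2*τ₂) (2*τ₁₂) 0 1 p)
          * (∑' p : ℤ × ℤ, trm (2*τ₁) (2*τ₂) (2*τ₁₂) (1/2) 1 p) := by
  have H1 : 0 < (2*τ₁).im := by rw [double_im]; linarith
  have H2 : 0 < (2*τ₂).im := by rw [double_im]; linarith
  have H : (2*τ₁₂).im ^ 2 < (2*τ₁).im * (2*τ₂).im := by
    rw [double_im, double_im, double_im]; nlinarith
  have hA := trm_summable hτ₁ hτ₂ hτ (1/2) 1
  have hB := trm_summable hτ₁ hτ₂ hτ (1/2) 0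
  have hC := trm_summable H1 H2 H 0 1
  have hD := trm_summable H1 H2 H (1/2) 1
  have hE := trm_summable H1 H2 H 1 1
  have hF : Summable (fun k : (ℤ×ℤ) × (ℤ×ℤ) =>
      trm τ₁ τ₂ τ₁₂ (1/2) 1 k.1 * trm τ₁ τ₂ τ₁₂ (1/2) 0 k.2) :=
    summable_mul_of_summable_norm hA hB
  rw [tsum_mul_tsum_of_summable_norm hA hB,
    ← mixE.tsum_eq (fun k : (ℤ×ℤ) × (ℤ×ℤ) =>
      trm τ₁ τ₂ τ₁₂ (1/2) 1 k.1 * trm τ₁ τ₂ τ₁₂ (1/2) 0 k.2)]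
  have hG : Summable (fun c : (Bool × Bool) × ((ℤ×ℤ) × (ℤ×ℤ)) =>
      trm τ₁ τ₂ τ₁₂ (1/2) 1 (mixE c).1 * trm τ₁ τ₂ τ₁₂ (1/2) 0 (mixE c).2) :=
    mixE.summable_iff.mpr hF
  rw [Summable.tsum_prod hG, tsum_fintype, Fintype.sum_prod_type]
  simp only [Fintype.sum_bool]
  have Ztt : (∑' c : (ℤ×ℤ) × (ℤ×ℤ),
      trm τ₁ τ₂ τ₁₂ (1/2) 1 (mixE ((true, true), c)).1 *
        trm τ₁ τ₂ τ₁₂ (1/2) 0 (mixE ((true, true), c)).2) = 0 := by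
    refine tsum_eq_zero_of_invol inv1 _ fun x => ?_
    obtain ⟨⟨r, s⟩, ⟨r', s'⟩⟩ := x
    rw [inv1_apply, mixE_tt, mixE_tt]
    dsimp only
    simp only [trm]
    rw [← Complex.exp_add, ← Complex.exp_add]
    exact exp_eq_neg_exp _ _ (-1 - r') (by push_cast; ring)
  have Ztf : (∑' c : (ℤ×ℤ) × (ℤ×ℤ),
      trm τ₁ τ₂ τ₁₂ (1/2) 1 (mixE ((true, false), c)).1 *
        trm τ₁ τ₂ τ₁₂ (1/2) 0 (mixE ((true, false), c)).2) = 0 := by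
    refine tsum_eq_zero_of_invol inv0 _ fun x => ?_
    obtain ⟨⟨r, s⟩, ⟨r', s'⟩⟩ := x
    rw [inv0_apply, mixE_tf, mixE_tf]
    dsimp only
    simp only [trm]
    rw [← Complex.exp_add, ← Complex.exp_add]
    exact exp_eq_neg_exp _ _ (-1 - r') (by push_cast; ring)
  have Eff : (∑' c : (ℤ×ℤ) × (ℤ×ℤ),
      trm τ₁ τ₂ τ₁₂ (1/2) 1 (mixE ((false, false), c)).1 *
        trm τ₁ τ₂ τ₁₂ (1/2) 0 (mixE ((false, false), c)).2)
      = (∑' p : ℤ × ℤ, trm (2*τ₁) (2*τ₂) (2*τ₁₂) (1/2) 1 p) *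
        (∑' p : ℤ × ℤ, trm (2*τ₁) (2*τ₂) (2*τ₁₂) 0 1 p) := by
    rw [tsum_mul_tsum_of_summable_norm hD hC]
    refine tsum_congr fun x => ?_
    obtain ⟨⟨r, s⟩, ⟨r', s'⟩⟩ := x
    rw [mixE_ff]
    dsimp only
    simp only [trm]
    rw [← Complex.exp_add, ← Complex.exp_add]
    congr 1
    push_cast
    ring
  have Eft : (∑' c : (ℤ×ℤ) × (ℤ×ℤ),
      trm τ₁ τ₂ τ₁₂ (1/2) 1 (mixE ((false, true), c)).1 *
        trm τ₁ τ₂ τ₁₂ (1/2) 0 (mixE ((false, true), c)).2)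
      = (∑' p : ℤ × ℤ, trm (2*τ₁) (2*τ₂) (2*τ₁₂) 1 1 p) *
        (∑' p : ℤ × ℤ, trm (2*τ₁) (2*τ₂) (2*τ₁₂) (1/2) 1 p) := by
    rw [tsum_mul_tsum_of_summable_norm hE hD]
    refine tsum_congr fun x => ?_
    obtain ⟨⟨r, s⟩, ⟨r', s'⟩⟩ := x
    rw [mixE_ft]
    dsimp only
    simp only [trm]
    rw [← Complex.exp_add, ← Complex.exp_add]
    congr 1
    push_cast
    ring
  rw [Ztt, Ztf, Eff, Eft, trm_shift]
  ring

end parts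

theorem constants_relations_10 (τ₁ τ₂ τ₁₂ : ℂ)
    (hτ₁ : 0 < τ₁.im) (hτ₂ : 0 < τ₂.im) (hτ : τ₁₂.im ^ 2 < τ₁.im * τ₂.im) :
    theta τ₁ τ₂ τ₁₂ 0 0 1 0 0 0 * theta τ₁ τ₂ τ₁₂ 0 0 0 0 0 0 =
        Theta2 τ₁ τ₂ τ₁₂ 0 0 1 0 0 0 ^ 2 + Theta2 τ₁ τ₂ τ₁₂ 0 1 1 0 0 0 ^ 2 ∧
      theta τ₁ τ₂ τ₁₂ 0 1 1 0 0 0 * theta τ₁ τ₂ τ₁₂ 0 1 0 0 0 0 =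
        2 * Theta2 τ₁ τ₂ τ₁₂ 0 0 1 0 0 0 * Theta2 τ₁ τ₂ τ₁₂ 0 1 1 0 0 0 := by
  unfold Theta2
  rw [theta_eq0 τ₁ τ₂ τ₁₂ 1, theta_eq0 τ₁ τ₂ τ₁₂ 0, theta_eq1 τ₁ τ₂ τ₁₂ 1,
    theta_eq1 τ₁ τ₂ τ₁₂ 0, theta_eq0 (2*τ₁) (2*τ₂) (2*τ₁₂) 1, theta_eq1 (2*τ₁) (2*τ₂) (2*τ₁₂) 1]
  exact ⟨part1 hτ₁ hτ₂ hτ, part2 hτ₁ hτ₂ hτ⟩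
end

section
/- Half-characteristic functional relation (a): for all complex u, v, θ[1,1;0,0](u,v) · θ[0,0;0,0](u,v) = ( Θ[1/2,1/2;0,0](2u,2v) + Θ[−1/2,−1/2;0,0](2u,2v) ) · Θ[1/2,1/2;0,0](0,0) + ( Θ[1/2,−1/2;0,0](2u,2v) + Θ[−1/2,1/2;0,0](2u,2v) ) · Θ[1/2,−1/2;0,0](0,0). -/
open Complex

noncomputable def Tm (τ₁ τ₂ τ₁₂ : ℂ) (a c b d : ℝ) (x y : ℂ) (p : ℤ × ℤ) : ℂ :=
  Complex.exp
    ((Real.pi : ℂ) * Complex.I *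
        (τ₁ * ((p.1 : ℂ) + (a : ℂ) / 2) ^ 2 + τ₂ * ((p.2 : ℂ) + (c : ℂ) / 2) ^ 2 +
          2 * τ₁₂ * ((p.1 : ℂ) + (a : ℂ) / 2) * ((p.2 : ℂ) + (c : ℂ) / 2)) +
      2 * (Real.pi : ℂ) * Complex.I *
        (((p.1 : ℂ) + (a : ℂ) / 2) * (x + (b : ℂ) / 2) +
          ((p.2 : ℂ) + (c : ℂ) / 2) * (y + (d : ℂ) / 2)))

private lemma norm_Tm (τ₁ τ₂ τ₁₂ : ℂ) (a c b d : ℝ) (x y : ℂ) (p : ℤ × ℤ) :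
    ‖Tm τ₁ τ₂ τ₁₂ a c b d x y p‖ =
      Real.exp (-Real.pi * (τ₁.im * (p.1 + a/2)^2 + τ₂.im * (p.2 + c/2)^2
          + 2 * τ₁₂.im * (p.1 + a/2) * (p.2 + c/2))
        - 2 * Real.pi * ((p.1 + a/2) * (x + (b:ℂ)/2).im + (p.2 + c/2) * (y + (d:ℂ)/2).im)) := by
  rw [Tm, Complex.norm_exp]
  congr 1
  simp [Complex.add_re, Complex.mul_re, Complex.mul_im, Complex.I_re, Complex.I_im,
    Complex.add_im, pow_two]
  ring

private lemma sum1 {ε : ℝ} (hε : 0 < ε) (α X : ℝ) :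
    Summable (fun m : ℤ => Real.exp (-Real.pi * (ε * ((m:ℝ)+α)^2 - 2 * X * |(m:ℝ)+α|))) := by
  have h := summable_pow_mul_jacobiTheta₂_term_bound (ε * |α| + |X|) hε 0
  simp only [pow_zero, one_mul] at h
  refine ((h.mul_left (Real.exp (Real.pi * (2 * |X| * |α|)))).of_nonneg_of_le
    (fun m => (Real.exp_pos _).le) (fun m => ?_))
  rw [← Real.exp_add, Real.exp_le_exp]
  have h1 : |(m:ℝ)+α| ≤ |(m:ℝ)| + |α| := abs_add_le _ _
  have h2 : ((m:ℝ))^2 - 2 * |α| * |(m:ℝ)| ≤ ((m:ℝ)+α)^2 := by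
    have := abs_mul_abs_self ((m:ℝ)); have := neg_abs_le ((m:ℝ)*α)
    nlinarith [abs_nonneg ((m:ℝ)), abs_mul ((m:ℝ)) α, sq_nonneg α, abs_nonneg α]
  have h3 : X * |(m:ℝ)+α| ≤ |X| * (|(m:ℝ)| + |α|) := by
    calc X * |(m:ℝ)+α| ≤ |X| * |(m:ℝ)+α| :=
          mul_le_mul_of_nonneg_right (le_abs_self X) (abs_nonneg _)
      _ ≤ |X| * (|(m:ℝ)| + |α|) := mul_le_mul_of_nonneg_left h1 (abs_nonneg _)
  have hπ := Real.pi_pos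
  rw [show (-Real.pi * (ε * ((m:ℝ)+α)^2 - 2 * X * |(m:ℝ)+α|)) =
    Real.pi * (2 * (X * |(m:ℝ)+α|)) - Real.pi * (ε * ((m:ℝ)+α)^2) by ring]
  rw [show Real.pi * (2 * |X| * |α|) + -Real.pi * (ε * ((m:ℝ))^2 - 2 * (ε * |α| + |X|) * |(m:ℤ)|) =
    Real.pi * (2 * (|X| * (|(m:ℝ)|+|α|))) - Real.pi * (ε * ((m:ℝ)^2 - 2 * |α| * |(m:ℝ)|)) by
      push_cast; ring]
  have := mul_le_mul_of_nonneg_left h2 (le_of_lt hε)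
  gcongr

set_option maxHeartbeats 1000000 in
private lemma summable_norm_Tm {τ₁ τ₂ τ₁₂ : ℂ}
    (hτ₁ : 0 < τ₁.im) (hτ₂ : 0 < τ₂.im) (hτ : τ₁₂.im ^ 2 < τ₁.im * τ₂.im)
    (a c b d : ℝ) (x y : ℂ) :
    Summable (fun p : ℤ × ℤ => ‖Tm τ₁ τ₂ τ₁₂ a c b d x y p‖) := by
  set y₁ := τ₁.im; set y₂ := τ₂.im; set w := τ₁₂.im
  set δ : ℝ := (w^2/y₂ + y₁)/2 with hδdef
  have hδ : 0 < δ := by positivity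
  have hε₁ : 0 < y₁ - δ := by
    have : w^2/y₂ < y₁ := (div_lt_iff₀ hτ₂).mpr (by linarith [hτ])
    simp only [hδdef]; linarith
  have hε₂ : 0 < y₂ - w^2/δ := by
    have h1 : w^2/δ * δ = w^2 := div_mul_cancel₀ _ hδ.ne'
    have h2 : y₂ * δ = (w^2 + y₁*y₂)/2 := by
      rw [hδdef]; field_simp
    nlinarith [hδ]
  set X := |(x + (b:ℂ)/2).im|
  set Y := |(y + (d:ℂ)/2).im|
  have hsum : Summable (fun p : ℤ × ℤ =>
      Real.exp (-Real.pi * ((y₁-δ) * ((p.1:ℝ)+a/2)^2 - 2 * X * |(p.1:ℝ)+a/2|)) *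
      Real.exp (-Real.pi * ((y₂-w^2/δ) * ((p.2:ℝ)+c/2)^2 - 2 * Y * |(p.2:ℝ)+c/2|))) :=
    (sum1 hε₁ (a/2) X).mul_of_nonneg (sum1 hε₂ (c/2) Y)
      (fun _ => (Real.exp_pos _).le) (fun _ => (Real.exp_pos _).le)
  refine hsum.of_nonneg_of_le (fun _ => norm_nonneg _) (fun p => ?_)
  rw [norm_Tm, ← Real.exp_add, Real.exp_le_exp]
  set s := ((p.1:ℝ)+a/2); set t := ((p.2:ℝ)+c/2)
  have key : -(δ*s^2 + w^2/δ*t^2) ≤ 2*w*s*t := by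
    have h3 : δ * (δ*s^2 + w^2/δ*t^2 + 2*w*s*t) = (δ*s+w*t)^2 := by
      field_simp; ring
    have hE : 0 ≤ δ*s^2 + w^2/δ*t^2 + 2*w*s*t := by
      by_contra hneg
      push_neg at hneg
      nlinarith [h3, sq_nonneg (δ*s+w*t), hδ]
    linarith [hE]
  have hX : -(X*|s|) ≤ s * (x + (b:ℂ)/2).im := by
    calc -(X*|s|) ≤ -|s * (x + (b:ℂ)/2).im| := by
          rw [abs_mul, mul_comm]
      _ ≤ _ := neg_abs_le _
  have hY : -(Y*|t|) ≤ t * (y + (d:ℂ)/2).im := by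
    calc -(Y*|t|) ≤ -|t * (y + (d:ℂ)/2).im| := by
          rw [abs_mul, mul_comm]
      _ ≤ _ := neg_abs_le _
  have hπ := Real.pi_pos
  have hmain : (y₁-δ) * s^2 - 2*X*|s| + ((y₂-w^2/δ) * t^2 - 2*Y*|t|) ≤
      (y₁ * s^2 + y₂ * t^2 + 2*w*s*t)
        + 2 * (s * (x + (b:ℂ)/2).im + t * (y + (d:ℂ)/2).im) := by
    linarith [key, hX, hY]
  have h2 := mul_le_mul_of_nonneg_left hmain hπ.le
  linarith [h2]

/-- the sector bijection -/
def phiFun : (Bool × Bool) × ((ℤ × ℤ) × (ℤ × ℤ)) → (ℤ × ℤ) × (ℤ × ℤ) :=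
  fun q => ((q.2.1.1 + q.2.2.1 + (cond q.1.1 (-1) 0), q.2.1.2 + q.2.2.2 + (cond q.1.2 (-1) 0)),
            (q.2.1.1 - q.2.2.1, q.2.1.2 - q.2.2.2))

lemma phiFun_bij : Function.Bijective phiFun := by
  constructor
  · rintro ⟨⟨s, t⟩, ⟨⟨A, C⟩, ⟨B, D⟩⟩⟩ ⟨⟨s', t'⟩, ⟨⟨A', C'⟩, ⟨B', D'⟩⟩⟩ h
    simp only [phiFun, Prod.mk.injEq] at h
    obtain ⟨⟨h1, h2⟩, h3, h4⟩ := h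
    cases s <;> cases s' <;> cases t <;> cases t' <;>
      simp_all <;> omega
  · rintro ⟨⟨p₁, p₂⟩, ⟨q₁, q₂⟩⟩
    rcases Int.even_or_odd (p₁ + q₁) with ⟨k, hk⟩ | ⟨k, hk⟩ <;>
      rcases Int.even_or_odd (p₂ + q₂) with ⟨l, hl⟩ | ⟨l, hl⟩
    · exact ⟨((false, false), ((k, l), (k - q₁, l - q₂))), by simp [phiFun]; omega⟩
    · exact ⟨((false, true), ((k, l + 1), (k - q₁, l + 1 - q₂))), by simp [phiFun]; omega⟩
    · exact ⟨((true, false), ((k + 1, l), (k + 1 - q₁, l - q₂))), by simp [phiFun]; omega⟩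
    · exact ⟨((true, true), ((k + 1, l + 1), (k + 1 - q₁, l + 1 - q₂))), by simp [phiFun]; omega⟩

noncomputable def phiEquiv : (Bool × Bool) × ((ℤ × ℤ) × (ℤ × ℤ)) ≃ (ℤ × ℤ) × (ℤ × ℤ) :=
  Equiv.ofBijective phiFun phiFun_bij

/-- key pointwise exponential identity -/
lemma sector_identity (τ₁ τ₂ τ₁₂ : ℂ) (u v : ℂ) (σ₁ σ₂ : ℤ) (a' c' : ℝ)
    (h1 : (a' : ℂ) = σ₁ + 1/2) (h2 : (c' : ℂ) = σ₂ + 1/2) (A B C D : ℤ) :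
    Tm τ₁ τ₂ τ₁₂ 1 1 0 0 u v (A + B + σ₁, C + D + σ₂) *
      Tm τ₁ τ₂ τ₁₂ 0 0 0 0 u v (A - B, C - D) =
    Tm (2*τ₁) (2*τ₂) (2*τ₁₂) a' c' 0 0 (2*u) (2*v) (A, C) *
      Tm (2*τ₁) (2*τ₂) (2*τ₁₂) a' c' 0 0 0 0 (B, D) := by
  simp only [Tm, ← Complex.exp_add]
  congr 1
  push_cast
  rw [h1, h2]
  push_cast
  ring

lemma phiEquiv_apply (x : (Bool × Bool) × ((ℤ × ℤ) × (ℤ × ℤ))) : phiEquiv x = phiFun x := rfl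

lemma Tm_neg_char (τ₁ τ₂ τ₁₂ : ℂ) (a c : ℝ) :
    (∑' p : ℤ × ℤ, Tm τ₁ τ₂ τ₁₂ (-a) (-c) 0 0 0 0 p) =
      ∑' p : ℤ × ℤ, Tm τ₁ τ₂ τ₁₂ a c 0 0 0 0 p := by
  rw [← (Equiv.neg (ℤ × ℤ)).tsum_eq (fun p => Tm τ₁ τ₂ τ₁₂ a c 0 0 0 0 p)]
  refine tsum_congr fun p => ?_
  simp only [Tm, Equiv.neg_apply, Prod.fst_neg, Prod.snd_neg]
  congr 1
  push_cast
  ring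

theorem half_characteristic_relation_a (τ₁ τ₂ τ₁₂ : ℂ)
    (hτ₁ : 0 < τ₁.im) (hτ₂ : 0 < τ₂.im) (hτ : τ₁₂.im ^ 2 < τ₁.im * τ₂.im)
    (u v : ℂ) :
    theta τ₁ τ₂ τ₁₂ 1 1 0 0 u v * theta τ₁ τ₂ τ₁₂ 0 0 0 0 u v =
      (Theta2 τ₁ τ₂ τ₁₂ (1/2) (1/2) 0 0 (2 * u) (2 * v) +
          Theta2 τ₁ τ₂ τ₁₂ (-(1/2)) (-(1/2)) 0 0 (2 * u) (2 * v)) *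
        Theta2 τ₁ τ₂ τ₁₂ (1/2) (1/2) 0 0 0 0 +
      (Theta2 τ₁ τ₂ τ₁₂ (1/2) (-(1/2)) 0 0 (2 * u) (2 * v) +
          Theta2 τ₁ τ₂ τ₁₂ (-(1/2)) (1/2) 0 0 (2 * u) (2 * v)) *
        Theta2 τ₁ τ₂ τ₁₂ (1/2) (-(1/2)) 0 0 0 0 := by
  have h2τ₁ : 0 < (2 * τ₁).im := by simp [Complex.mul_im]; linarith
  have h2τ₂ : 0 < (2 * τ₂).im := by simp [Complex.mul_im]; linarith
  have h2τ : (2 * τ₁₂).im ^ 2 < (2 * τ₁).im * (2 * τ₂).im := by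
    simp [Complex.mul_im]; nlinarith
  have H1 := summable_norm_Tm hτ₁ hτ₂ hτ 1 1 0 0 u v
  have H0 := summable_norm_Tm hτ₁ hτ₂ hτ 0 0 0 0 u v
  have HG : ∀ (a c : ℝ) (x y : ℂ),
      Summable fun p : ℤ × ℤ => ‖Tm (2*τ₁) (2*τ₂) (2*τ₁₂) a c 0 0 x y p‖ :=
    fun a c x y => summable_norm_Tm h2τ₁ h2τ₂ h2τ a c 0 0 x y
  have hth : ∀ a c : ℝ, theta τ₁ τ₂ τ₁₂ a c 0 0 u v = ∑' p, Tm τ₁ τ₂ τ₁₂ a c 0 0 u v p :=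
    fun _ _ => rfl
  have hT2 : ∀ (a c : ℝ) (x y : ℂ), Theta2 τ₁ τ₂ τ₁₂ a c 0 0 x y =
      ∑' p, Tm (2*τ₁) (2*τ₂) (2*τ₁₂) a c 0 0 x y p := fun _ _ _ _ => rfl
  -- sector computation
  have sector : ∀ (s t : Bool) (a' c' : ℝ),
      ((a' : ℂ) = (cond s (-1 : ℤ) 0 : ℤ) + 1/2) → ((c' : ℂ) = (cond t (-1 : ℤ) 0 : ℤ) + 1/2) →
      (∑' yz : (ℤ × ℤ) × (ℤ × ℤ),
          Tm τ₁ τ₂ τ₁₂ 1 1 0 0 u v (phiEquiv ((s, t), yz)).1 *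
            Tm τ₁ τ₂ τ₁₂ 0 0 0 0 u v (phiEquiv ((s, t), yz)).2) =
        Theta2 τ₁ τ₂ τ₁₂ a' c' 0 0 (2 * u) (2 * v) * Theta2 τ₁ τ₂ τ₁₂ a' c' 0 0 0 0 := by
    intro s t a' c' h1 h2
    have step : ∀ yz : (ℤ × ℤ) × (ℤ × ℤ),
        Tm τ₁ τ₂ τ₁₂ 1 1 0 0 u v (phiEquiv ((s, t), yz)).1 *
          Tm τ₁ τ₂ τ₁₂ 0 0 0 0 u v (phiEquiv ((s, t), yz)).2 =
        Tm (2*τ₁) (2*τ₂) (2*τ₁₂) a' c' 0 0 (2*u) (2*v) yz.1 *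
          Tm (2*τ₁) (2*τ₂) (2*τ₁₂) a' c' 0 0 0 0 yz.2 := by
      intro yz
      rw [phiEquiv_apply]
      exact sector_identity τ₁ τ₂ τ₁₂ u v _ _ a' c' h1 h2 yz.1.1 yz.2.1 yz.1.2 yz.2.2
    rw [tsum_congr step, ← tsum_mul_tsum_of_summable_norm (HG a' c' (2*u) (2*v)) (HG a' c' 0 0),
      hT2, hT2]
  have hFnorm : Summable fun z : (ℤ × ℤ) × (ℤ × ℤ) =>
      ‖Tm τ₁ τ₂ τ₁₂ 1 1 0 0 u v z.1 * Tm τ₁ τ₂ τ₁₂ 0 0 0 0 u v z.2‖ := H1.mul_norm H0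
  have hcomp : Summable fun x : (Bool × Bool) × ((ℤ × ℤ) × (ℤ × ℤ)) =>
      Tm τ₁ τ₂ τ₁₂ 1 1 0 0 u v (phiEquiv x).1 * Tm τ₁ τ₂ τ₁₂ 0 0 0 0 u v (phiEquiv x).2 :=
    phiEquiv.summable_iff.mpr hFnorm.of_norm
  rw [hth, hth, tsum_mul_tsum_of_summable_norm H1 H0,
    ← phiEquiv.tsum_eq (fun z => Tm τ₁ τ₂ τ₁₂ 1 1 0 0 u v z.1 * Tm τ₁ τ₂ τ₁₂ 0 0 0 0 u v z.2),
    Summable.tsum_prod hcomp, tsum_fintype, Fintype.sum_prod_type]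
  simp only [Fintype.univ_bool, Finset.sum_insert, Finset.mem_singleton, Finset.sum_singleton, reduceCtorEq, not_false_eq_true]
  rw [sector false false (1/2) (1/2) (by norm_num) (by norm_num),
    sector false true (1/2) (-(1/2)) (by norm_num) (by norm_num),
    sector true false (-(1/2)) (1/2) (by norm_num) (by norm_num),
    sector true true (-(1/2)) (-(1/2)) (by norm_num) (by norm_num)]
  have hneg1 : Theta2 τ₁ τ₂ τ₁₂ (-(1/2)) (-(1/2)) 0 0 0 0 = Theta2 τ₁ τ₂ τ₁₂ (1/2) (1/2) 0 0 0 0 := by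
    rw [hT2, hT2]; exact Tm_neg_char _ _ _ _ _
  have hneg2 : Theta2 τ₁ τ₂ τ₁₂ (-(1/2)) (1/2) 0 0 0 0 = Theta2 τ₁ τ₂ τ₁₂ (1/2) (-(1/2)) 0 0 0 0 := by
    rw [hT2, hT2]
    have := Tm_neg_char (2*τ₁) (2*τ₂) (2*τ₁₂) (1/2) (-(1/2))
    rw [neg_neg] at this
    exact this
  rw [hneg1, hneg2]
  ring
end

section
/- Half-characteristic functional relation (c): for all complex u, v, θ[1,1;1,0](u,v) · θ[0,0;1,0](u,v) = i · ( Θ[1/2,1/2;0,0](2u,2v) − Θ[−1/2,−1/2;0,0](2u,2v) ) · Θ[1/2,1/2;0,0](0,0) + i · ( Θ[1/2,−1/2;0,0](2u,2v) − Θ[−1/2,1/2;0,0](2u,2v) ) · Θ[1/2,−1/2;0,0](0,0), where i = √−1. -/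
open Complex

/-! ### Auxiliary definitions and lemmas -/

/-- A single term of the genus-two theta series. -/
noncomputable def tterm (τ₁ τ₂ τ₁₂ : ℂ) (a c b d : ℝ) (x y : ℂ) (p : ℤ × ℤ) : ℂ :=
  Complex.exp
    ((Real.pi : ℂ) * Complex.I *
        (τ₁ * ((p.1 : ℂ) + (a : ℂ) / 2) ^ 2 + τ₂ * ((p.2 : ℂ) + (c : ℂ) / 2) ^ 2 +
          2 * τ₁₂ * ((p.1 : ℂ) + (a : ℂ) / 2) * ((p.2 : ℂ) + (c : ℂ) / 2)) +
      2 * (Real.pi : ℂ) * Complex.I *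
        (((p.1 : ℂ) + (a : ℂ) / 2) * (x + (b : ℂ) / 2) +
          ((p.2 : ℂ) + (c : ℂ) / 2) * (y + (d : ℂ) / 2)))

lemma theta_eq_tsum (τ₁ τ₂ τ₁₂ : ℂ) (a c b d : ℝ) (x y : ℂ) :
    theta τ₁ τ₂ τ₁₂ a c b d x y = ∑' p : ℤ × ℤ, tterm τ₁ τ₂ τ₁₂ a c b d x y p := rfl

lemma exp_re_aux (τ₁ τ₂ τ₁₂ : ℂ) (X Y : ℝ) (w z : ℂ) :
    ((Real.pi : ℂ) * I * (τ₁ * (X:ℂ)^2 + τ₂ * (Y:ℂ)^2 + 2 * τ₁₂ * (X:ℂ) * (Y:ℂ)) +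
      2 * (Real.pi : ℂ) * I * ((X:ℂ) * w + (Y:ℂ) * z)).re
    = -Real.pi * (τ₁.im * X^2 + τ₂.im * Y^2 + 2 * τ₁₂.im * X * Y)
      - 2 * Real.pi * (X * w.im + Y * z.im) := by
  simp [Complex.add_re, Complex.mul_re, Complex.mul_im, Complex.add_im, pow_two]
  ring

lemma summable_exp_int (δ r : ℝ) (hδ : 0 < δ) :
    Summable fun m : ℤ => Real.exp (-δ * (m:ℝ)^2 + r * m) := by
  have h := summable_pow_mul_jacobiTheta₂_term_bound (|r|/(2*Real.pi))
    (show (0:ℝ) < δ/Real.pi by positivity) 0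
  simp only [pow_zero, one_mul, Int.cast_abs] at h
  refine h.of_nonneg_of_le (fun _ => (Real.exp_pos _).le) (fun n => ?_)
  apply Real.exp_le_exp.mpr
  have hpi := Real.pi_pos
  have h2 : -Real.pi * (δ/Real.pi * (n:ℝ)^2 - 2*(|r|/(2*Real.pi)) * |(n:ℝ)|) =
      -δ*(n:ℝ)^2 + |r| * |(n:ℝ)| := by
    field_simp
    ring
  rw [h2]
  have : r * (n:ℝ) ≤ |r| * |(n:ℝ)| := by
    calc r * n ≤ |r * n| := le_abs_self _
    _ = |r| * |(n:ℝ)| := abs_mul _ _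
  linarith

lemma summable_exp_shift (δ r h : ℝ) (hδ : 0 < δ) :
    Summable fun m : ℤ => Real.exp (-δ * ((m:ℝ)+h)^2 + r * ((m:ℝ)+h)) := by
  have := (summable_exp_int δ (r - 2*δ*h) hδ).mul_right (Real.exp (r*h - δ*h^2))
  refine this.congr (fun m => ?_)
  rw [← Real.exp_add]
  congr 1
  ring

lemma norm_tterm (τ₁ τ₂ τ₁₂ : ℂ) (a c b d : ℝ) (x y : ℂ) (p : ℤ × ℤ) :
    ‖tterm τ₁ τ₂ τ₁₂ a c b d x y p‖ =
      Real.exp (-Real.pi * (τ₁.im * ((p.1:ℝ)+a/2)^2 + τ₂.im * ((p.2:ℝ)+c/2)^2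
          + 2 * τ₁₂.im * ((p.1:ℝ)+a/2) * ((p.2:ℝ)+c/2))
        - 2 * Real.pi * (((p.1:ℝ)+a/2) * (x + (b:ℂ)/2).im
            + ((p.2:ℝ)+c/2) * (y + (d:ℂ)/2).im)) := by
  have h1 : ((p.1 : ℂ) + (a : ℂ) / 2) = (((p.1:ℝ) + a/2 : ℝ) : ℂ) := by push_cast; ring
  have h2 : ((p.2 : ℂ) + (c : ℂ) / 2) = (((p.2:ℝ) + c/2 : ℝ) : ℂ) := by push_cast; ring
  rw [tterm, h1, h2, Complex.norm_exp, exp_re_aux]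

lemma quad_lower {α β γ : ℝ} (hα : 0 < α) (hβ : 0 < β) (hγ : γ^2 < α*β) (X Y : ℝ) :
    (α*β - γ^2)/(α+β) * (X^2 + Y^2) ≤ α*X^2 + β*Y^2 + 2*γ*X*Y := by
  set δ := (α*β - γ^2)/(α+β) with hδdef
  have hαβ : 0 < α + β := by linarith
  have hδ : 0 < δ := div_pos (by linarith) hαβ
  have hδα : δ < α := by
    rw [hδdef, div_lt_iff₀ hαβ]
    nlinarith [sq_nonneg γ]
  have hid : (α-δ)*(β-δ) - γ^2 = δ^2 := by
    have h : δ * (α+β) = α*β - γ^2 := by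
      rw [hδdef]; field_simp
    nlinarith [h]
  nlinarith [sq_nonneg ((α-δ)*X + γ*Y), sq_nonneg (δ*Y), hδα, hid]

set_option maxHeartbeats 1000000 in
lemma summable_norm_tterm {τ₁ τ₂ τ₁₂ : ℂ}
    (hτ₁ : 0 < τ₁.im) (hτ₂ : 0 < τ₂.im) (hτ : τ₁₂.im^2 < τ₁.im * τ₂.im)
    (a c b d : ℝ) (x y : ℂ) :
    Summable fun p : ℤ × ℤ => ‖tterm τ₁ τ₂ τ₁₂ a c b d x y p‖ := by
  set α := τ₁.im
  set β := τ₂.im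
  set γ := τ₁₂.im
  set δ := (α*β - γ^2)/(α+β) with hδdef
  have hαβ : 0 < α + β := by linarith
  have hδ : 0 < δ := div_pos (by linarith) hαβ
  have hpi := Real.pi_pos
  have hmaj : Summable fun p : ℤ × ℤ =>
      Real.exp (-(Real.pi*δ) * ((p.1:ℝ)+a/2)^2
          + (-2*Real.pi*(x + (b:ℂ)/2).im) * ((p.1:ℝ)+a/2)) *
      Real.exp (-(Real.pi*δ) * ((p.2:ℝ)+c/2)^2
          + (-2*Real.pi*(y + (d:ℂ)/2).im) * ((p.2:ℝ)+c/2)) :=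
    (summable_exp_shift _ _ _ (by positivity)).mul_of_nonneg
      (summable_exp_shift _ _ _ (by positivity))
      (fun _ => (Real.exp_pos _).le) (fun _ => (Real.exp_pos _).le)
  refine hmaj.of_nonneg_of_le (fun _ => norm_nonneg _) (fun p => ?_)
  rw [norm_tterm, ← Real.exp_add]
  apply Real.exp_le_exp.mpr
  have hq := quad_lower hτ₁ hτ₂ hτ ((p.1:ℝ)+a/2) ((p.2:ℝ)+c/2)
  rw [← hδdef] at hq
  have hq' := mul_le_mul_of_nonneg_left hq hpi.le
  linarith [hq']

def phiF : (Bool × Bool) × ((ℤ × ℤ) × (ℤ × ℤ)) → (ℤ × ℤ) × (ℤ × ℤ)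
  | ((bM, bN), ((K, L), (K', L'))) =>
    let e : ℤ := if bN then 1 else 0
    if bM then ((K - K' - 1, L - L' - e), (K + K', L + L'))
    else ((K + K', L + L' - e), (K - K', L - L'))

lemma phiF_bij : Function.Bijective phiF := by
  constructor
  · rintro ⟨⟨b1M, b1N⟩, ⟨⟨K, L⟩, ⟨K', L'⟩⟩⟩ ⟨⟨b2M, b2N⟩, ⟨⟨A, B⟩, ⟨A', B'⟩⟩⟩ h
    cases b1M <;> cases b1N <;> cases b2M <;> cases b2N <;>
      simp_all [phiF, Prod.ext_iff] <;> omega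
  · rintro ⟨⟨m, n⟩, ⟨m', n'⟩⟩
    by_cases hM : (m + m') % 2 = 1 <;> by_cases hN : (n + n') % 2 = 1
    · exact ⟨((true, true), (((m+m'+1)/2, (n+n'+1)/2), ((m'-m-1)/2, (n'-n-1)/2))),
        by simp [phiF, Prod.ext_iff]; omega⟩
    · exact ⟨((true, false), (((m+m'+1)/2, (n+n')/2), ((m'-m-1)/2, (n'-n)/2))),
        by simp [phiF, Prod.ext_iff]; omega⟩
    · exact ⟨((false, true), (((m+m')/2, (n+n'+1)/2), ((m-m')/2, (n-n'+1)/2))),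
        by simp [phiF, Prod.ext_iff]; omega⟩
    · exact ⟨((false, false), (((m+m')/2, (n+n')/2), ((m-m')/2, (n-n')/2))),
        by simp [phiF, Prod.ext_iff]; omega⟩

noncomputable def phiE : ((Bool × Bool) × ((ℤ × ℤ) × (ℤ × ℤ))) ≃ ((ℤ × ℤ) × (ℤ × ℤ)) :=
  Equiv.ofBijective phiF phiF_bij

lemma exp_phase_pos (K : ℤ) :
    Complex.exp (2*(Real.pi:ℂ)*I*(K:ℂ) + (Real.pi:ℂ)/2*I) = I := by
  rw [Complex.exp_add,
    show (2*(Real.pi:ℂ)*I*(K:ℂ)) = (K:ℂ)*(2*(Real.pi:ℂ)*I) by ring,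
    Complex.exp_int_mul_two_pi_mul_I, one_mul,
    show ((Real.pi:ℂ)/2*I) = ((Real.pi/2 : ℝ):ℂ)*I by push_cast; ring,
    Complex.exp_mul_I]
  norm_num [Complex.ofReal_div]

lemma exp_phase_neg (K : ℤ) :
    Complex.exp (2*(Real.pi:ℂ)*I*(K:ℂ) - (Real.pi:ℂ)/2*I) = -I := by
  rw [sub_eq_add_neg, Complex.exp_add,
    show (2*(Real.pi:ℂ)*I*(K:ℂ)) = (K:ℂ)*(2*(Real.pi:ℂ)*I) by ring,
    Complex.exp_int_mul_two_pi_mul_I, one_mul,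
    show (-((Real.pi:ℂ)/2*I)) = ((-(Real.pi/2) : ℝ):ℂ)*I by push_cast; ring,
    Complex.exp_mul_I]
  norm_num [Complex.ofReal_div]

lemma key_ee (τ₁ τ₂ τ₁₂ : ℂ) (u v : ℂ) (K L K' L' : ℤ) :
    tterm τ₁ τ₂ τ₁₂ 1 1 1 0 u v (K+K', L+L') * tterm τ₁ τ₂ τ₁₂ 0 0 1 0 u v (K-K', L-L') =
    I * (tterm (2*τ₁) (2*τ₂) (2*τ₁₂) (1/2) (1/2) 0 0 (2*u) (2*v) (K, L) *
         tterm (2*τ₁) (2*τ₂) (2*τ₁₂) (1/2) (1/2) 0 0 0 0 (K', L')) := by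
  rw [← exp_phase_pos K, tterm, tterm, tterm, tterm, ← Complex.exp_add, ← Complex.exp_add,
    ← Complex.exp_add]
  congr 1
  push_cast
  ring

lemma key_eo (τ₁ τ₂ τ₁₂ : ℂ) (u v : ℂ) (K L K' L' : ℤ) :
    tterm τ₁ τ₂ τ₁₂ 1 1 1 0 u v (K+K', L+L'-1) * tterm τ₁ τ₂ τ₁₂ 0 0 1 0 u v (K-K', L-L') =
    I * (tterm (2*τ₁) (2*τ₂) (2*τ₁₂) (1/2) (-(1/2)) 0 0 (2*u) (2*v) (K, L) *
         tterm (2*τ₁) (2*τ₂) (2*τ₁₂) (1/2) (-(1/2)) 0 0 0 0 (K', L')) := by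
  rw [← exp_phase_pos K, tterm, tterm, tterm, tterm, ← Complex.exp_add, ← Complex.exp_add,
    ← Complex.exp_add]
  congr 1
  push_cast
  ring

lemma key_oe (τ₁ τ₂ τ₁₂ : ℂ) (u v : ℂ) (K L K' L' : ℤ) :
    tterm τ₁ τ₂ τ₁₂ 1 1 1 0 u v (K-K'-1, L-L') * tterm τ₁ τ₂ τ₁₂ 0 0 1 0 u v (K+K', L+L') =
    -I * (tterm (2*τ₁) (2*τ₂) (2*τ₁₂) (-(1/2)) (1/2) 0 0 (2*u) (2*v) (K, L) *
         tterm (2*τ₁) (2*τ₂) (2*τ₁₂) (1/2) (-(1/2)) 0 0 0 0 (K', L')) := by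
  rw [← exp_phase_neg K, tterm, tterm, tterm, tterm, ← Complex.exp_add, ← Complex.exp_add,
    ← Complex.exp_add]
  congr 1
  push_cast
  ring

lemma key_oo (τ₁ τ₂ τ₁₂ : ℂ) (u v : ℂ) (K L K' L' : ℤ) :
    tterm τ₁ τ₂ τ₁₂ 1 1 1 0 u v (K-K'-1, L-L'-1) * tterm τ₁ τ₂ τ₁₂ 0 0 1 0 u v (K+K', L+L') =
    -I * (tterm (2*τ₁) (2*τ₂) (2*τ₁₂) (-(1/2)) (-(1/2)) 0 0 (2*u) (2*v) (K, L) *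
         tterm (2*τ₁) (2*τ₂) (2*τ₁₂) (1/2) (1/2) 0 0 0 0 (K', L')) := by
  rw [← exp_phase_neg K, tterm, tterm, tterm, tterm, ← Complex.exp_add, ← Complex.exp_add,
    ← Complex.exp_add]
  congr 1
  push_cast
  ring


lemma phiE_apply (w : (Bool × Bool) × ((ℤ × ℤ) × (ℤ × ℤ))) : phiE w = phiF w := rfl

set_option maxHeartbeats 1000000 in
theorem half_characteristic_relation_c (τ₁ τ₂ τ₁₂ : ℂ)
    (hτ₁ : 0 < τ₁.im) (hτ₂ : 0 < τ₂.im) (hτ : τ₁₂.im ^ 2 < τ₁.im * τ₂.im)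
    (u v : ℂ) :
    theta τ₁ τ₂ τ₁₂ 1 1 1 0 u v * theta τ₁ τ₂ τ₁₂ 0 0 1 0 u v =
      Complex.I * (Theta2 τ₁ τ₂ τ₁₂ (1/2) (1/2) 0 0 (2 * u) (2 * v) -
          Theta2 τ₁ τ₂ τ₁₂ (-(1/2)) (-(1/2)) 0 0 (2 * u) (2 * v)) *
        Theta2 τ₁ τ₂ τ₁₂ (1/2) (1/2) 0 0 0 0 +
      Complex.I * (Theta2 τ₁ τ₂ τ₁₂ (1/2) (-(1/2)) 0 0 (2 * u) (2 * v) -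
          Theta2 τ₁ τ₂ τ₁₂ (-(1/2)) (1/2) 0 0 (2 * u) (2 * v)) *
        Theta2 τ₁ τ₂ τ₁₂ (1/2) (-(1/2)) 0 0 0 0 := by
  have h2τ₁ : 0 < (2*τ₁).im := by simp only [Complex.mul_im]; norm_num; linarith
  have h2τ₂ : 0 < (2*τ₂).im := by simp only [Complex.mul_im]; norm_num; linarith
  have h2τ : (2*τ₁₂).im^2 < (2*τ₁).im * (2*τ₂).im := by
    simp only [Complex.mul_im]; norm_num; nlinarith
  have hf := summable_norm_tterm hτ₁ hτ₂ hτ 1 1 1 0 u v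
  have hg := summable_norm_tterm hτ₁ hτ₂ hτ 0 0 1 0 u v
  have hT1 := summable_norm_tterm h2τ₁ h2τ₂ h2τ (1/2) (1/2) 0 0 (2*u) (2*v)
  have hT2 := summable_norm_tterm h2τ₁ h2τ₂ h2τ (-(1/2)) (-(1/2)) 0 0 (2*u) (2*v)
  have hT3 := summable_norm_tterm h2τ₁ h2τ₂ h2τ (1/2) (-(1/2)) 0 0 (2*u) (2*v)
  have hT4 := summable_norm_tterm h2τ₁ h2τ₂ h2τ (-(1/2)) (1/2) 0 0 (2*u) (2*v)
  have hS1 := summable_norm_tterm h2τ₁ h2τ₂ h2τ (1/2) (1/2) 0 0 0 0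
  have hS3 := summable_norm_tterm h2τ₁ h2τ₂ h2τ (1/2) (-(1/2)) 0 0 0 0
  have hF : Summable (fun z : (ℤ × ℤ) × (ℤ × ℤ) => tterm τ₁ τ₂ τ₁₂ 1 1 1 0 u v z.1 * tterm τ₁ τ₂ τ₁₂ 0 0 1 0 u v z.2) :=
    summable_mul_of_summable_norm hf hg
  have hFphi : Summable (fun w => tterm τ₁ τ₂ τ₁₂ 1 1 1 0 u v (phiE w).1 * tterm τ₁ τ₂ τ₁₂ 0 0 1 0 u v (phiE w).2) :=
    (phiE.summable_iff (f := fun z : (ℤ × ℤ) × (ℤ × ℤ) => tterm τ₁ τ₂ τ₁₂ 1 1 1 0 u v z.1 * tterm τ₁ τ₂ τ₁₂ 0 0 1 0 u v z.2)).mpr hF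
  have step1 : theta τ₁ τ₂ τ₁₂ 1 1 1 0 u v * theta τ₁ τ₂ τ₁₂ 0 0 1 0 u v =
      ∑' z : (ℤ × ℤ) × (ℤ × ℤ), tterm τ₁ τ₂ τ₁₂ 1 1 1 0 u v z.1 * tterm τ₁ τ₂ τ₁₂ 0 0 1 0 u v z.2 := by
    rw [theta_eq_tsum, theta_eq_tsum]
    exact tsum_mul_tsum_of_summable_norm hf hg
  have step2 : (∑' z : (ℤ × ℤ) × (ℤ × ℤ), tterm τ₁ τ₂ τ₁₂ 1 1 1 0 u v z.1 * tterm τ₁ τ₂ τ₁₂ 0 0 1 0 u v z.2) =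
      ∑' w : (Bool × Bool) × ((ℤ × ℤ) × (ℤ × ℤ)), tterm τ₁ τ₂ τ₁₂ 1 1 1 0 u v (phiE w).1 * tterm τ₁ τ₂ τ₁₂ 0 0 1 0 u v (phiE w).2 :=
    (phiE.tsum_eq (fun z : (ℤ × ℤ) × (ℤ × ℤ) => tterm τ₁ τ₂ τ₁₂ 1 1 1 0 u v z.1 * tterm τ₁ τ₂ τ₁₂ 0 0 1 0 u v z.2)).symm
  have step3 : (∑' w : (Bool × Bool) × ((ℤ × ℤ) × (ℤ × ℤ)), tterm τ₁ τ₂ τ₁₂ 1 1 1 0 u v (phiE w).1 * tterm τ₁ τ₂ τ₁₂ 0 0 1 0 u v (phiE w).2) =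
      ∑' b : Bool × Bool, ∑' p : (ℤ × ℤ) × (ℤ × ℤ), tterm τ₁ τ₂ τ₁₂ 1 1 1 0 u v (phiE (b, p)).1 * tterm τ₁ τ₂ τ₁₂ 0 0 1 0 u v (phiE (b, p)).2 :=
    Summable.tsum_prod hFphi
  have class_ee : (∑' p : (ℤ × ℤ) × (ℤ × ℤ),
        tterm τ₁ τ₂ τ₁₂ 1 1 1 0 u v (phiE ((false, false), p)).1 * tterm τ₁ τ₂ τ₁₂ 0 0 1 0 u v (phiE ((false, false), p)).2) =
      I * ((∑' p : ℤ × ℤ, tterm (2*τ₁) (2*τ₂) (2*τ₁₂) (1/2) (1/2) 0 0 (2*u) (2*v) p) * (∑' p : ℤ × ℤ, tterm (2*τ₁) (2*τ₂) (2*τ₁₂) (1/2) (1/2) 0 0 0 0 p)) := by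
    rw [show (∑' p : (ℤ × ℤ) × (ℤ × ℤ),
        tterm τ₁ τ₂ τ₁₂ 1 1 1 0 u v (phiE ((false, false), p)).1 * tterm τ₁ τ₂ τ₁₂ 0 0 1 0 u v (phiE ((false, false), p)).2) =
        ∑' p : (ℤ × ℤ) × (ℤ × ℤ), I * (tterm (2*τ₁) (2*τ₂) (2*τ₁₂) (1/2) (1/2) 0 0 (2*u) (2*v) p.1 * tterm (2*τ₁) (2*τ₂) (2*τ₁₂) (1/2) (1/2) 0 0 0 0 p.2) from
      tsum_congr (by
        rintro ⟨⟨K, L⟩, ⟨K', L'⟩⟩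
        have hφ : phiE ((false, false), ((K, L), (K', L'))) = ((K+K', L+L'), (K-K', L-L')) := by
          rw [phiE_apply]; simp [phiF]
        rw [hφ]
        exact key_ee τ₁ τ₂ τ₁₂ u v K L K' L'), tsum_mul_left]
    congr 1
    exact (tsum_mul_tsum_of_summable_norm hT1 hS1).symm
  have class_eo : (∑' p : (ℤ × ℤ) × (ℤ × ℤ),
        tterm τ₁ τ₂ τ₁₂ 1 1 1 0 u v (phiE ((false, true), p)).1 * tterm τ₁ τ₂ τ₁₂ 0 0 1 0 u v (phiE ((false, true), p)).2) =
      I * ((∑' p : ℤ × ℤ, tterm (2*τ₁) (2*τ₂) (2*τ₁₂) (1/2) (-(1/2)) 0 0 (2*u) (2*v) p) * (∑' p : ℤ × ℤ, tterm (2*τ₁) (2*τ₂) (2*τ₁₂) (1/2) (-(1/2)) 0 0 0 0 p)) := by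
    rw [show (∑' p : (ℤ × ℤ) × (ℤ × ℤ),
        tterm τ₁ τ₂ τ₁₂ 1 1 1 0 u v (phiE ((false, true), p)).1 * tterm τ₁ τ₂ τ₁₂ 0 0 1 0 u v (phiE ((false, true), p)).2) =
        ∑' p : (ℤ × ℤ) × (ℤ × ℤ), I * (tterm (2*τ₁) (2*τ₂) (2*τ₁₂) (1/2) (-(1/2)) 0 0 (2*u) (2*v) p.1 * tterm (2*τ₁) (2*τ₂) (2*τ₁₂) (1/2) (-(1/2)) 0 0 0 0 p.2) from
      tsum_congr (by
        rintro ⟨⟨K, L⟩, ⟨K', L'⟩⟩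
        have hφ : phiE ((false, true), ((K, L), (K', L'))) = ((K+K', L+L'-1), (K-K', L-L')) := by
          rw [phiE_apply]; simp [phiF]
        rw [hφ]
        exact key_eo τ₁ τ₂ τ₁₂ u v K L K' L'), tsum_mul_left]
    congr 1
    exact (tsum_mul_tsum_of_summable_norm hT3 hS3).symm
  have class_oe : (∑' p : (ℤ × ℤ) × (ℤ × ℤ),
        tterm τ₁ τ₂ τ₁₂ 1 1 1 0 u v (phiE ((true, false), p)).1 * tterm τ₁ τ₂ τ₁₂ 0 0 1 0 u v (phiE ((true, false), p)).2) =
      (-I) * ((∑' p : ℤ × ℤ, tterm (2*τ₁) (2*τ₂) (2*τ₁₂) (-(1/2)) (1/2) 0 0 (2*u) (2*v) p) * (∑' p : ℤ × ℤ, tterm (2*τ₁) (2*τ₂) (2*τ₁₂) (1/2) (-(1/2)) 0 0 0 0 p)) := by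
    rw [show (∑' p : (ℤ × ℤ) × (ℤ × ℤ),
        tterm τ₁ τ₂ τ₁₂ 1 1 1 0 u v (phiE ((true, false), p)).1 * tterm τ₁ τ₂ τ₁₂ 0 0 1 0 u v (phiE ((true, false), p)).2) =
        ∑' p : (ℤ × ℤ) × (ℤ × ℤ), (-I) * (tterm (2*τ₁) (2*τ₂) (2*τ₁₂) (-(1/2)) (1/2) 0 0 (2*u) (2*v) p.1 * tterm (2*τ₁) (2*τ₂) (2*τ₁₂) (1/2) (-(1/2)) 0 0 0 0 p.2) from
      tsum_congr (by
        rintro ⟨⟨K, L⟩, ⟨K', L'⟩⟩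
        have hφ : phiE ((true, false), ((K, L), (K', L'))) = ((K-K'-1, L-L'), (K+K', L+L')) := by
          rw [phiE_apply]; simp [phiF]
        rw [hφ]
        exact key_oe τ₁ τ₂ τ₁₂ u v K L K' L'), tsum_mul_left]
    congr 1
    exact (tsum_mul_tsum_of_summable_norm hT4 hS3).symm
  have class_oo : (∑' p : (ℤ × ℤ) × (ℤ × ℤ),
        tterm τ₁ τ₂ τ₁₂ 1 1 1 0 u v (phiE ((true, true), p)).1 * tterm τ₁ τ₂ τ₁₂ 0 0 1 0 u v (phiE ((true, true), p)).2) =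
      (-I) * ((∑' p : ℤ × ℤ, tterm (2*τ₁) (2*τ₂) (2*τ₁₂) (-(1/2)) (-(1/2)) 0 0 (2*u) (2*v) p) * (∑' p : ℤ × ℤ, tterm (2*τ₁) (2*τ₂) (2*τ₁₂) (1/2) (1/2) 0 0 0 0 p)) := by
    rw [show (∑' p : (ℤ × ℤ) × (ℤ × ℤ),
        tterm τ₁ τ₂ τ₁₂ 1 1 1 0 u v (phiE ((true, true), p)).1 * tterm τ₁ τ₂ τ₁₂ 0 0 1 0 u v (phiE ((true, true), p)).2) =
        ∑' p : (ℤ × ℤ) × (ℤ × ℤ), (-I) * (tterm (2*τ₁) (2*τ₂) (2*τ₁₂) (-(1/2)) (-(1/2)) 0 0 (2*u) (2*v) p.1 * tterm (2*τ₁) (2*τ₂) (2*τ₁₂) (1/2) (1/2) 0 0 0 0 p.2) from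
      tsum_congr (by
        rintro ⟨⟨K, L⟩, ⟨K', L'⟩⟩
        have hφ : phiE ((true, true), ((K, L), (K', L'))) = ((K-K'-1, L-L'-1), (K+K', L+L')) := by
          rw [phiE_apply]; simp [phiF]
        rw [hφ]
        exact key_oo τ₁ τ₂ τ₁₂ u v K L K' L'), tsum_mul_left]
    congr 1
    exact (tsum_mul_tsum_of_summable_norm hT2 hS1).symm
  calc theta τ₁ τ₂ τ₁₂ 1 1 1 0 u v * theta τ₁ τ₂ τ₁₂ 0 0 1 0 u v
      = ∑' b : Bool × Bool, ∑' p : (ℤ × ℤ) × (ℤ × ℤ),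
          tterm τ₁ τ₂ τ₁₂ 1 1 1 0 u v (phiE (b, p)).1 * tterm τ₁ τ₂ τ₁₂ 0 0 1 0 u v (phiE (b, p)).2 := by
        rw [step1, step2, step3]
    _ = ∑ b : Bool × Bool, ∑' p : (ℤ × ℤ) × (ℤ × ℤ),
          tterm τ₁ τ₂ τ₁₂ 1 1 1 0 u v (phiE (b, p)).1 * tterm τ₁ τ₂ τ₁₂ 0 0 1 0 u v (phiE (b, p)).2 := tsum_fintype _
    _ = I * ((∑' p : ℤ × ℤ, tterm (2*τ₁) (2*τ₂) (2*τ₁₂) (1/2) (1/2) 0 0 (2*u) (2*v) p) * (∑' p : ℤ × ℤ, tterm (2*τ₁) (2*τ₂) (2*τ₁₂) (1/2) (1/2) 0 0 0 0 p))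
        + I * ((∑' p : ℤ × ℤ, tterm (2*τ₁) (2*τ₂) (2*τ₁₂) (1/2) (-(1/2)) 0 0 (2*u) (2*v) p) * (∑' p : ℤ × ℤ, tterm (2*τ₁) (2*τ₂) (2*τ₁₂) (1/2) (-(1/2)) 0 0 0 0 p))
        + (-I) * ((∑' p : ℤ × ℤ, tterm (2*τ₁) (2*τ₂) (2*τ₁₂) (-(1/2)) (1/2) 0 0 (2*u) (2*v) p) * (∑' p : ℤ × ℤ, tterm (2*τ₁) (2*τ₂) (2*τ₁₂) (1/2) (-(1/2)) 0 0 0 0 p))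
        + (-I) * ((∑' p : ℤ × ℤ, tterm (2*τ₁) (2*τ₂) (2*τ₁₂) (-(1/2)) (-(1/2)) 0 0 (2*u) (2*v) p) * (∑' p : ℤ × ℤ, tterm (2*τ₁) (2*τ₂) (2*τ₁₂) (1/2) (1/2) 0 0 0 0 p)) := by
        rw [Fintype.sum_prod_type, Fintype.sum_bool, Fintype.sum_bool, Fintype.sum_bool,
          class_ee, class_eo, class_oe, class_oo]
        ring
    _ = Complex.I * (Theta2 τ₁ τ₂ τ₁₂ (1/2) (1/2) 0 0 (2 * u) (2 * v) -
          Theta2 τ₁ τ₂ τ₁₂ (-(1/2)) (-(1/2)) 0 0 (2 * u) (2 * v)) *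
        Theta2 τ₁ τ₂ τ₁₂ (1/2) (1/2) 0 0 0 0 +
      Complex.I * (Theta2 τ₁ τ₂ τ₁₂ (1/2) (-(1/2)) 0 0 (2 * u) (2 * v) -
          Theta2 τ₁ τ₂ τ₁₂ (-(1/2)) (1/2) 0 0 (2 * u) (2 * v)) *
        Theta2 τ₁ τ₂ τ₁₂ (1/2) (-(1/2)) 0 0 0 0 := by
        show _ = Complex.I * ((∑' p : ℤ × ℤ, tterm (2*τ₁) (2*τ₂) (2*τ₁₂) (1/2) (1/2) 0 0 (2 * u) (2 * v) p) -
            (∑' p : ℤ × ℤ, tterm (2*τ₁) (2*τ₂) (2*τ₁₂) (-(1/2)) (-(1/2)) 0 0 (2 * u) (2 * v) p)) *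
            (∑' p : ℤ × ℤ, tterm (2*τ₁) (2*τ₂) (2*τ₁₂) (1/2) (1/2) 0 0 0 0 p) +
          Complex.I * ((∑' p : ℤ × ℤ, tterm (2*τ₁) (2*τ₂) (2*τ₁₂) (1/2) (-(1/2)) 0 0 (2 * u) (2 * v) p) -
            (∑' p : ℤ × ℤ, tterm (2*τ₁) (2*τ₂) (2*τ₁₂) (-(1/2)) (1/2) 0 0 (2 * u) (2 * v) p)) *
            (∑' p : ℤ × ℤ, tterm (2*τ₁) (2*τ₂) (2*τ₁₂) (1/2) (-(1/2)) 0 0 0 0 p)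
        ring
end

section
/- Inverse half-characteristic functional relation: for all complex u, v, 2 · Θ[1/2,1/2;0,0](2u,2v) · ( Θ[1/2,1/2;0,0](0,0)² − Θ[1/2,−1/2;0,0](0,0)² ) = θ[1,1;0,0](u,v) θ[0,0;0,0](u,v) Θ[1/2,1/2;0,0](0,0) − θ[0,1;0,0](u,v) θ[1,0;0,0](u,v) Θ[1/2,−1/2;0,0](0,0) − i · ( θ[1,1;1,0](u,v) θ[0,0;1,0](u,v) Θ[1/2,1/2;0,0](0,0) − θ[1,0;1,0](u,v) θ[0,1;1,0](u,v) Θ[1/2,−1/2;0,0](0,0) ), where i = √−1. -/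
open Complex

noncomputable def term (τ₁ τ₂ τ₁₂ : ℂ) (a c b d : ℝ) (x y : ℂ) (p : ℤ × ℤ) : ℂ :=
  Complex.exp
    ((Real.pi : ℂ) * Complex.I *
        (τ₁ * ((p.1 : ℂ) + (a : ℂ) / 2) ^ 2 + τ₂ * ((p.2 : ℂ) + (c : ℂ) / 2) ^ 2 +
          2 * τ₁₂ * ((p.1 : ℂ) + (a : ℂ) / 2) * ((p.2 : ℂ) + (c : ℂ) / 2)) +
      2 * (Real.pi : ℂ) * Complex.I *
        (((p.1 : ℂ) + (a : ℂ) / 2) * (x + (b : ℂ) / 2) +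
          ((p.2 : ℂ) + (c : ℂ) / 2) * (y + (d : ℂ) / 2)))

lemma theta_eq (τ₁ τ₂ τ₁₂ : ℂ) (a c b d : ℝ) (x y : ℂ) :
    theta τ₁ τ₂ τ₁₂ a c b d x y = ∑' p : ℤ × ℤ, term τ₁ τ₂ τ₁₂ a c b d x y p := rfl

open Real in
lemma norm_term (τ₁ τ₂ τ₁₂ : ℂ) (a c b d : ℝ) (x y : ℂ) (p : ℤ × ℤ) :
    ‖term τ₁ τ₂ τ₁₂ a c b d x y p‖ =
      rexp (-π * (τ₁.im * ((p.1 : ℝ) + a / 2) ^ 2 + τ₂.im * ((p.2 : ℝ) + c / 2) ^ 2 +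
            2 * τ₁₂.im * ((p.1 : ℝ) + a / 2) * ((p.2 : ℝ) + c / 2))
          - 2 * π * (((p.1 : ℝ) + a / 2) * x.im + ((p.2 : ℝ) + c / 2) * y.im)) := by
  obtain ⟨m, n⟩ := p
  rw [term, Complex.norm_exp]
  congr 1
  have : ((Real.pi : ℂ) * Complex.I *
        (τ₁ * ((m : ℂ) + (a : ℂ) / 2) ^ 2 + τ₂ * ((n : ℂ) + (c : ℂ) / 2) ^ 2 +
          2 * τ₁₂ * ((m : ℂ) + (a : ℂ) / 2) * ((n : ℂ) + (c : ℂ) / 2)) +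
      2 * (Real.pi : ℂ) * Complex.I *
        (((m : ℂ) + (a : ℂ) / 2) * (x + (b : ℂ) / 2) +
          ((n : ℂ) + (c : ℂ) / 2) * (y + (d : ℂ) / 2)))
      = ((π * ((m : ℝ) + a / 2) ^ 2 : ℝ) : ℂ) * τ₁ * Complex.I
        + ((π * ((n : ℝ) + c / 2) ^ 2 : ℝ) : ℂ) * τ₂ * Complex.I
        + ((2 * π * ((m : ℝ) + a / 2) * ((n : ℝ) + c / 2) : ℝ) : ℂ) * τ₁₂ * Complex.I
        + ((2 * π * ((m : ℝ) + a / 2) : ℝ) : ℂ) * x * Complex.I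
        + ((2 * π * ((n : ℝ) + c / 2) : ℝ) : ℂ) * y * Complex.I
        + ((π * ((m : ℝ) + a / 2) * b + π * ((n : ℝ) + c / 2) * d : ℝ) : ℂ) * Complex.I := by
    push_cast; ring
  rw [this]
  simp only [Complex.add_re, Complex.mul_I_re, Complex.im_ofReal_mul, Complex.ofReal_im]
  ring

open Real in
lemma quad_lower_s16 {y₁ y₂ y₁₂ : ℝ} (h₁ : 0 < y₁) (h₂ : 0 < y₂) (h : y₁₂ ^ 2 < y₁ * y₂) :
    ∃ δ > 0, ∀ s t : ℝ, δ * (s ^ 2 + t ^ 2) ≤ y₁ * s ^ 2 + y₂ * t ^ 2 + 2 * y₁₂ * s * t := by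
  refine ⟨(y₁ * y₂ - y₁₂ ^ 2) / (y₁ + y₂), div_pos (by linarith) (by linarith), fun s t => ?_⟩
  rw [div_mul_eq_mul_div, div_le_iff₀ (by linarith)]
  nlinarith [sq_nonneg (y₁ * s + y₁₂ * t), sq_nonneg (y₂ * t + y₁₂ * s)]

open Real in
lemma summable_exp_quad (δ : ℝ) (hδ : 0 < δ) (α X : ℝ) :
    Summable fun m : ℤ => rexp (-(π * δ) * ((m : ℝ) + α) ^ 2 - 2 * π * ((m : ℝ) + α) * X) := by
  have key := (summable_pow_mul_jacobiTheta₂_term_bound (|δ * α + X|) hδ 0).mul_left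
      (rexp (-(π * δ) * α ^ 2 - 2 * π * α * X))
  refine Summable.of_nonneg_of_le (fun _ => (Real.exp_pos _).le) (fun m => ?_) key
  rw [pow_zero, one_mul, ← Real.exp_add, Real.exp_le_exp]
  have h1 : -(|(m : ℝ)| * |δ * α + X|) ≤ (m : ℝ) * (δ * α + X) := by
    rw [← abs_mul]; exact neg_abs_le _
  have h2 : π * -(|(m : ℝ)| * |δ * α + X|) ≤ π * ((m : ℝ) * (δ * α + X)) :=
    mul_le_mul_of_nonneg_left h1 pi_pos.le
  push_cast
  nlinarith [h2]

open Real in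
lemma summable_norm_term (τ₁ τ₂ τ₁₂ : ℂ) (hτ₁ : 0 < τ₁.im) (hτ₂ : 0 < τ₂.im)
    (hτ : τ₁₂.im ^ 2 < τ₁.im * τ₂.im) (a c b d : ℝ) (x y : ℂ) :
    Summable fun p : ℤ × ℤ => ‖term τ₁ τ₂ τ₁₂ a c b d x y p‖ := by
  obtain ⟨δ, hδ, hq⟩ := quad_lower_s16 hτ₁ hτ₂ hτ
  have hs := (summable_exp_quad δ hδ (a / 2) x.im).mul_of_nonneg
    (summable_exp_quad δ hδ (c / 2) y.im)
    (fun _ => (Real.exp_pos _).le) (fun _ => (Real.exp_pos _).le)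
  refine Summable.of_nonneg_of_le (fun _ => norm_nonneg _) (fun p => ?_) hs
  rw [norm_term, ← Real.exp_add, Real.exp_le_exp]
  have := hq ((p.1 : ℝ) + a / 2) ((p.2 : ℝ) + c / 2)
  nlinarith [mul_le_mul_of_nonneg_left this pi_pos.le]

/-- Parity splitting equivalence in one direction. -/
def parEquiv : Bool × ℤ × ℤ ≃ ℤ × ℤ where
  toFun w := (w.2.1 + w.2.2 + (cond w.1 1 0), w.2.1 - w.2.2)
  invFun p := (decide ((p.1 - p.2) % 2 = 1),
    ((p.1 + p.2 - (p.1 - p.2) % 2) / 2, (p.1 - p.2 - (p.1 - p.2) % 2) / 2))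
  left_inv := by
    rintro ⟨e, k, l⟩
    rcases e <;> simp <;> constructor <;> omega
  right_inv := by
    rintro ⟨m, m'⟩
    have h : (m - m') % 2 = 0 ∨ (m - m') % 2 = 1 := by omega
    rcases h with h | h <;> simp [h] <;> constructor <;> omega

/-- Full reindexing for the product of two genus-2 theta series. -/
def fullEquiv : (Bool × Bool) × (ℤ × ℤ) × (ℤ × ℤ) ≃ (ℤ × ℤ) × (ℤ × ℤ) :=
  ((Equiv.refl (Bool × Bool)).prodCongr (Equiv.prodProdProdComm ℤ ℤ ℤ ℤ)).trans
    ((Equiv.prodProdProdComm Bool Bool (ℤ × ℤ) (ℤ × ℤ)).trans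
      ((parEquiv.prodCongr parEquiv).trans (Equiv.prodProdProdComm ℤ ℤ ℤ ℤ)))

lemma fullEquiv_apply (e₁ e₂ : Bool) (k₁ k₂ l₁ l₂ : ℤ) :
    fullEquiv ((e₁, e₂), ((k₁, k₂), (l₁, l₂))) =
      ((k₁ + l₁ + (cond e₁ 1 0), k₂ + l₂ + (cond e₂ 1 0)), (k₁ - l₁, k₂ - l₂)) := rfl

lemma term_mul_term (τ₁ τ₂ τ₁₂ : ℂ) (e₁ e₂ : ℤ) (a c a' c' b d : ℝ) (x y : ℂ)
    (k₁ k₂ l₁ l₂ : ℤ) :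
    term τ₁ τ₂ τ₁₂ a c b d x y (k₁ + l₁ + e₁, k₂ + l₂ + e₂) *
      term τ₁ τ₂ τ₁₂ a' c' b d x y (k₁ - l₁, k₂ - l₂) =
    term (2 * τ₁) (2 * τ₂) (2 * τ₁₂) ((a + a') / 2 + e₁) ((c + c') / 2 + e₂) (2 * b) (2 * d)
        (2 * x) (2 * y) (k₁, k₂) *
      term (2 * τ₁) (2 * τ₂) (2 * τ₁₂) ((a - a') / 2 + e₁) ((c - c') / 2 + e₂) 0 0 0 0
        (l₁, l₂) := by
  simp only [term, ← Complex.exp_add]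
  congr 1
  push_cast
  ring

lemma summable_norm_term2 (τ₁ τ₂ τ₁₂ : ℂ) (hτ₁ : 0 < τ₁.im) (hτ₂ : 0 < τ₂.im)
    (hτ : τ₁₂.im ^ 2 < τ₁.im * τ₂.im) (a c b d : ℝ) (x y : ℂ) :
    Summable fun p : ℤ × ℤ => ‖term (2 * τ₁) (2 * τ₂) (2 * τ₁₂) a c b d x y p‖ := by
  refine summable_norm_term _ _ _ ?_ ?_ ?_ a c b d x y <;>
    simp only [Complex.mul_im, Complex.re_ofNat,
      Complex.im_ofNat] <;> nlinarith

lemma tsum_part (τ₁ τ₂ τ₁₂ : ℂ) (hτ₁ : 0 < τ₁.im) (hτ₂ : 0 < τ₂.im)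
    (hτ : τ₁₂.im ^ 2 < τ₁.im * τ₂.im) (e₁ e₂ : Bool) (a c a' c' b d : ℝ) (x y : ℂ) :
    (∑' q : (ℤ × ℤ) × (ℤ × ℤ),
        term τ₁ τ₂ τ₁₂ a c b d x y (fullEquiv ((e₁, e₂), q)).1 *
          term τ₁ τ₂ τ₁₂ a' c' b d x y (fullEquiv ((e₁, e₂), q)).2) =
      Theta2 τ₁ τ₂ τ₁₂ ((a + a') / 2 + ((cond e₁ 1 0 : ℤ) : ℝ))
          ((c + c') / 2 + ((cond e₂ 1 0 : ℤ) : ℝ)) (2 * b) (2 * d) (2 * x) (2 * y) *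
        Theta2 τ₁ τ₂ τ₁₂ ((a - a') / 2 + ((cond e₁ 1 0 : ℤ) : ℝ))
          ((c - c') / 2 + ((cond e₂ 1 0 : ℤ) : ℝ)) 0 0 0 0 := by
  have h1 := summable_norm_term2 τ₁ τ₂ τ₁₂ hτ₁ hτ₂ hτ
    ((a + a') / 2 + ((cond e₁ 1 0 : ℤ) : ℝ)) ((c + c') / 2 + ((cond e₂ 1 0 : ℤ) : ℝ))
    (2 * b) (2 * d) (2 * x) (2 * y)
  have h2 := summable_norm_term2 τ₁ τ₂ τ₁₂ hτ₁ hτ₂ hτ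
    ((a - a') / 2 + ((cond e₁ 1 0 : ℤ) : ℝ)) ((c - c') / 2 + ((cond e₂ 1 0 : ℤ) : ℝ))
    0 0 0 0
  rw [Theta2, Theta2, theta_eq, theta_eq, tsum_mul_tsum_of_summable_norm h1 h2]
  refine tsum_congr fun q => ?_
  obtain ⟨⟨k₁, k₂⟩, ⟨l₁, l₂⟩⟩ := q
  rw [fullEquiv_apply]
  exact term_mul_term τ₁ τ₂ τ₁₂ (cond e₁ 1 0) (cond e₂ 1 0) a c a' c' b d x y k₁ k₂ l₁ l₂

lemma theta_mul (τ₁ τ₂ τ₁₂ : ℂ) (hτ₁ : 0 < τ₁.im) (hτ₂ : 0 < τ₂.im)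
    (hτ : τ₁₂.im ^ 2 < τ₁.im * τ₂.im) (a c a' c' b d : ℝ) (x y : ℂ) :
    theta τ₁ τ₂ τ₁₂ a c b d x y * theta τ₁ τ₂ τ₁₂ a' c' b d x y =
      Theta2 τ₁ τ₂ τ₁₂ ((a + a') / 2) ((c + c') / 2) (2 * b) (2 * d) (2 * x) (2 * y) *
          Theta2 τ₁ τ₂ τ₁₂ ((a - a') / 2) ((c - c') / 2) 0 0 0 0 +
        Theta2 τ₁ τ₂ τ₁₂ ((a + a') / 2) ((c + c') / 2 + 1) (2 * b) (2 * d) (2 * x) (2 * y) *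
          Theta2 τ₁ τ₂ τ₁₂ ((a - a') / 2) ((c - c') / 2 + 1) 0 0 0 0 +
        Theta2 τ₁ τ₂ τ₁₂ ((a + a') / 2 + 1) ((c + c') / 2) (2 * b) (2 * d) (2 * x) (2 * y) *
          Theta2 τ₁ τ₂ τ₁₂ ((a - a') / 2 + 1) ((c - c') / 2) 0 0 0 0 +
        Theta2 τ₁ τ₂ τ₁₂ ((a + a') / 2 + 1) ((c + c') / 2 + 1) (2 * b) (2 * d) (2 * x) (2 * y) *
          Theta2 τ₁ τ₂ τ₁₂ ((a - a') / 2 + 1) ((c - c') / 2 + 1) 0 0 0 0 := by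
  have n1 := summable_norm_term τ₁ τ₂ τ₁₂ hτ₁ hτ₂ hτ a c b d x y
  have n2 := summable_norm_term τ₁ τ₂ τ₁₂ hτ₁ hτ₂ hτ a' c' b d x y
  have hF : Summable fun z : (ℤ × ℤ) × (ℤ × ℤ) =>
      term τ₁ τ₂ τ₁₂ a c b d x y z.1 * term τ₁ τ₂ τ₁₂ a' c' b d x y z.2 :=
    summable_mul_of_summable_norm n1 n2
  rw [theta_eq, theta_eq, tsum_mul_tsum_of_summable_norm n1 n2, ← fullEquiv.tsum_eq]
  have hG : Summable fun w : (Bool × Bool) × (ℤ × ℤ) × (ℤ × ℤ) =>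
      term τ₁ τ₂ τ₁₂ a c b d x y (fullEquiv w).1 *
        term τ₁ τ₂ τ₁₂ a' c' b d x y (fullEquiv w).2 :=
    (fullEquiv.summable_iff.mpr hF : _)
  rw [Summable.tsum_prod' hG (fun e => hG.comp_injective (fun q₁ q₂ h => by simpa using h)),
    tsum_fintype]
  have key := tsum_part τ₁ τ₂ τ₁₂ hτ₁ hτ₂ hτ
  simp only [Fintype.sum_prod_type, Fintype.sum_bool]
  rw [key true true, key true false, key false true, key false false]
  norm_num
  ring

lemma theta_fst_add_two (τ₁ τ₂ τ₁₂ : ℂ) (a c b d : ℝ) (x y : ℂ) :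
    theta τ₁ τ₂ τ₁₂ (a + 2) c b d x y = theta τ₁ τ₂ τ₁₂ a c b d x y := by
  rw [theta_eq, theta_eq,
    ← ((Equiv.addRight (1 : ℤ)).prodCongr (Equiv.refl ℤ)).tsum_eq
      (term τ₁ τ₂ τ₁₂ a c b d x y)]
  refine tsum_congr fun p => ?_
  obtain ⟨m, n⟩ := p
  show term τ₁ τ₂ τ₁₂ (a + 2) c b d x y (m, n) = term τ₁ τ₂ τ₁₂ a c b d x y (m + 1, n)
  simp only [term]
  congr 1
  push_cast
  ring

lemma theta_snd_add_two (τ₁ τ₂ τ₁₂ : ℂ) (a c b d : ℝ) (x y : ℂ) :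
    theta τ₁ τ₂ τ₁₂ a (c + 2) b d x y = theta τ₁ τ₂ τ₁₂ a c b d x y := by
  rw [theta_eq, theta_eq,
    ← ((Equiv.refl ℤ).prodCongr (Equiv.addRight (1 : ℤ))).tsum_eq
      (term τ₁ τ₂ τ₁₂ a c b d x y)]
  refine tsum_congr fun p => ?_
  obtain ⟨m, n⟩ := p
  show term τ₁ τ₂ τ₁₂ a (c + 2) b d x y (m, n) = term τ₁ τ₂ τ₁₂ a c b d x y (m, n + 1)
  simp only [term]
  congr 1
  push_cast
  ring

lemma theta_b_add_two (τ₁ τ₂ τ₁₂ : ℂ) (a c b d : ℝ) (x y : ℂ) :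
    theta τ₁ τ₂ τ₁₂ a c (b + 2) d x y =
      Complex.exp ((Real.pi : ℂ) * Complex.I * (a : ℂ)) * theta τ₁ τ₂ τ₁₂ a c b d x y := by
  rw [theta_eq, theta_eq, ← tsum_mul_left]
  refine tsum_congr fun p => ?_
  obtain ⟨m, n⟩ := p
  simp only [term]
  have h : ((Real.pi : ℂ) * Complex.I *
        (τ₁ * ((m : ℂ) + (a : ℂ) / 2) ^ 2 + τ₂ * ((n : ℂ) + (c : ℂ) / 2) ^ 2 +
          2 * τ₁₂ * ((m : ℂ) + (a : ℂ) / 2) * ((n : ℂ) + (c : ℂ) / 2)) +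
      2 * (Real.pi : ℂ) * Complex.I *
        (((m : ℂ) + (a : ℂ) / 2) * (x + ((b + 2 : ℝ) : ℂ) / 2) +
          ((n : ℂ) + (c : ℂ) / 2) * (y + (d : ℂ) / 2)))
      = ((Real.pi : ℂ) * Complex.I * (a : ℂ) +
          ((Real.pi : ℂ) * Complex.I *
            (τ₁ * ((m : ℂ) + (a : ℂ) / 2) ^ 2 + τ₂ * ((n : ℂ) + (c : ℂ) / 2) ^ 2 +
              2 * τ₁₂ * ((m : ℂ) + (a : ℂ) / 2) * ((n : ℂ) + (c : ℂ) / 2)) +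
            2 * (Real.pi : ℂ) * Complex.I *
              (((m : ℂ) + (a : ℂ) / 2) * (x + (b : ℂ) / 2) +
                ((n : ℂ) + (c : ℂ) / 2) * (y + (d : ℂ) / 2))))
        + (m : ℂ) * (2 * (Real.pi : ℂ) * Complex.I) := by
    push_cast
    ring
  rw [h, Complex.exp_add, Complex.exp_add, Complex.exp_int_mul_two_pi_mul_I, mul_one]

lemma theta_neg_zero (τ₁ τ₂ τ₁₂ : ℂ) (a c : ℝ) :
    theta τ₁ τ₂ τ₁₂ (-a) (-c) 0 0 0 0 = theta τ₁ τ₂ τ₁₂ a c 0 0 0 0 := by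
  rw [theta_eq, theta_eq,
    ← ((Equiv.neg ℤ).prodCongr (Equiv.neg ℤ)).tsum_eq (term τ₁ τ₂ τ₁₂ a c 0 0 0 0)]
  refine tsum_congr fun p => ?_
  obtain ⟨m, n⟩ := p
  show term τ₁ τ₂ τ₁₂ (-a) (-c) 0 0 0 0 (m, n) = term τ₁ τ₂ τ₁₂ a c 0 0 0 0 (-m, -n)
  simp only [term]
  congr 1
  push_cast
  ring

theorem inverse_half_characteristic_relation (τ₁ τ₂ τ₁₂ : ℂ)
    (hτ₁ : 0 < τ₁.im) (hτ₂ : 0 < τ₂.im) (hτ : τ₁₂.im ^ 2 < τ₁.im * τ₂.im)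
    (u v : ℂ) :
    2 * Theta2 τ₁ τ₂ τ₁₂ (1/2) (1/2) 0 0 (2 * u) (2 * v) *
        (Theta2 τ₁ τ₂ τ₁₂ (1/2) (1/2) 0 0 0 0 ^ 2 -
          Theta2 τ₁ τ₂ τ₁₂ (1/2) (-(1/2)) 0 0 0 0 ^ 2) =
      theta τ₁ τ₂ τ₁₂ 1 1 0 0 u v * theta τ₁ τ₂ τ₁₂ 0 0 0 0 u v *
          Theta2 τ₁ τ₂ τ₁₂ (1/2) (1/2) 0 0 0 0 -
        theta τ₁ τ₂ τ₁₂ 0 1 0 0 u v * theta τ₁ τ₂ τ₁₂ 1 0 0 0 u v *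
          Theta2 τ₁ τ₂ τ₁₂ (1/2) (-(1/2)) 0 0 0 0 -
        Complex.I *
          (theta τ₁ τ₂ τ₁₂ 1 1 1 0 u v * theta τ₁ τ₂ τ₁₂ 0 0 1 0 u v *
              Theta2 τ₁ τ₂ τ₁₂ (1/2) (1/2) 0 0 0 0 -
            theta τ₁ τ₂ τ₁₂ 1 0 1 0 u v * theta τ₁ τ₂ τ₁₂ 0 1 1 0 u v *
              Theta2 τ₁ τ₂ τ₁₂ (1/2) (-(1/2)) 0 0 0 0) := by
  -- characteristic conversion helpers
  have fst32 : ∀ (g B D : ℝ) (X Y : ℂ), Theta2 τ₁ τ₂ τ₁₂ (3/2) g B D X Y =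
      Theta2 τ₁ τ₂ τ₁₂ (-(1/2)) g B D X Y := by
    intro g B D X Y
    rw [Theta2, Theta2, show (3/2 : ℝ) = -(1/2) + 2 by norm_num, theta_fst_add_two]
  have snd32 : ∀ (g B D : ℝ) (X Y : ℂ), Theta2 τ₁ τ₂ τ₁₂ g (3/2) B D X Y =
      Theta2 τ₁ τ₂ τ₁₂ g (-(1/2)) B D X Y := by
    intro g B D X Y
    rw [Theta2, Theta2, show (3/2 : ℝ) = -(1/2) + 2 by norm_num, theta_snd_add_two]
  have negneg : Theta2 τ₁ τ₂ τ₁₂ (-(1/2)) (-(1/2)) 0 0 0 0 =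
      Theta2 τ₁ τ₂ τ₁₂ (1/2) (1/2) 0 0 0 0 := theta_neg_zero _ _ _ _ _
  have negpos : Theta2 τ₁ τ₂ τ₁₂ (-(1/2)) (1/2) 0 0 0 0 =
      Theta2 τ₁ τ₂ τ₁₂ (1/2) (-(1/2)) 0 0 0 0 := by
    have h := theta_neg_zero (2 * τ₁) (2 * τ₂) (2 * τ₁₂) (1/2) (-(1/2))
    rw [show (-(-(1/2)) : ℝ) = 1/2 by norm_num] at h
    exact h
  have bphase : ∀ (aa g : ℝ) (X Y : ℂ), Theta2 τ₁ τ₂ τ₁₂ aa g 2 0 X Y =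
      Complex.exp ((Real.pi : ℂ) * Complex.I * (aa : ℂ)) * Theta2 τ₁ τ₂ τ₁₂ aa g 0 0 X Y := by
    intro aa g X Y
    rw [Theta2, Theta2, show (2 : ℝ) = 0 + 2 by norm_num, theta_b_add_two]
  have expI : Complex.exp ((Real.pi : ℂ) * Complex.I * ((1/2 : ℝ) : ℂ)) = Complex.I := by
    rw [show (Real.pi : ℂ) * Complex.I * ((1/2 : ℝ) : ℂ) = (Real.pi/2 : ℝ) * Complex.I by
      push_cast; ring]
    simp [Complex.exp_mul_I]
  have expnI : Complex.exp ((Real.pi : ℂ) * Complex.I * ((-(1/2) : ℝ) : ℂ)) = -Complex.I := by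
    rw [show (Real.pi : ℂ) * Complex.I * ((-(1/2) : ℝ) : ℂ) = -((Real.pi/2 : ℝ) * Complex.I) by
      push_cast; ring]
    simp [Complex.exp_mul_I, Complex.exp_neg]
  have M := theta_mul τ₁ τ₂ τ₁₂ hτ₁ hτ₂ hτ
  have P1 := M 1 1 0 0 0 0 u v
  have P2 := M 0 1 1 0 0 0 u v
  have P3 := M 1 1 0 0 1 0 u v
  have P4 := M 1 0 0 1 1 0 u v
  rw [show ((1 : ℝ) + 0)/2 = 1/2 by norm_num, show ((1 : ℝ) - 0)/2 = 1/2 by norm_num,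
    show (2 : ℝ) * 0 = 0 by norm_num, show (1 : ℝ)/2 + 1 = 3/2 by norm_num] at P1
  simp only [fst32, snd32, negneg, negpos] at P1
  rw [show ((0 : ℝ) + 1)/2 = 1/2 by norm_num, show ((1 : ℝ) + 0)/2 = 1/2 by norm_num,
    show ((0 : ℝ) - 1)/2 = -(1/2) by norm_num, show ((1 : ℝ) - 0)/2 = 1/2 by norm_num,
    show (2 : ℝ) * 0 = 0 by norm_num, show (1 : ℝ)/2 + 1 = 3/2 by norm_num,
    show (-(1/2) : ℝ) + 1 = 1/2 by norm_num] at P2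
  simp only [fst32, snd32, negneg, negpos] at P2
  rw [show ((1 : ℝ) + 0)/2 = 1/2 by norm_num, show ((1 : ℝ) - 0)/2 = 1/2 by norm_num,
    show (2 : ℝ) * 0 = 0 by norm_num, show (2 : ℝ) * 1 = 2 by norm_num,
    show (1 : ℝ)/2 + 1 = 3/2 by norm_num] at P3
  simp only [fst32, snd32, bphase, expI, expnI, negneg, negpos] at P3
  rw [show ((1 : ℝ) + 0)/2 = 1/2 by norm_num, show ((0 : ℝ) + 1)/2 = 1/2 by norm_num,
    show ((1 : ℝ) - 0)/2 = 1/2 by norm_num, show ((0 : ℝ) - 1)/2 = -(1/2) by norm_num,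
    show (2 : ℝ) * 0 = 0 by norm_num, show (2 : ℝ) * 1 = 2 by norm_num,
    show (1 : ℝ)/2 + 1 = 3/2 by norm_num, show (-(1/2) : ℝ) + 1 = 1/2 by norm_num] at P4
  simp only [fst32, snd32, bphase, expI, expnI, negneg, negpos] at P4
  rw [P1, P2, P3, P4]
  linear_combination ((Theta2 τ₁ τ₂ τ₁₂ (1/2) (1/2) 0 0 0 0 ^ 2 -
      Theta2 τ₁ τ₂ τ₁₂ (1/2) (-(1/2)) 0 0 0 0 ^ 2) *
      (Theta2 τ₁ τ₂ τ₁₂ (1/2) (1/2) 0 0 (2*u) (2*v) -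
       Theta2 τ₁ τ₂ τ₁₂ (-(1/2)) (-(1/2)) 0 0 (2*u) (2*v))) * Complex.I_sq
end

section
/- Half-characteristic constants relations connecting the B sector with the A sector: θ[0,1;0,0](0,0) · θ[0,0;0,0](0,0) = 2 · ( Θ[0,1/2;0,0](0,0)² + Θ[1,1/2;0,0](0,0)² ) and θ[0,1;1,0](0,0) · θ[0,0;1,0](0,0) = 2 · ( Θ[0,1/2;0,0](0,0)² − Θ[1,1/2;0,0](0,0)² ). -/
open Complex


open Complex

namespace G2Aux


noncomputable def F (τ₁ τ₂ τ₁₂ : ℂ) (u v : ℝ) : ℂ :=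
  Complex.exp ((Real.pi : ℂ) * Complex.I *
    (τ₁ * (u:ℂ)^2 + τ₂ * (v:ℂ)^2 + 2 * τ₁₂ * (u:ℂ) * (v:ℂ)))

lemma norm_F (τ₁ τ₂ τ₁₂ : ℂ) (u v : ℝ) :
    ‖F τ₁ τ₂ τ₁₂ u v‖ =
      Real.exp (-Real.pi * (τ₁.im * u^2 + τ₂.im * v^2 + 2 * τ₁₂.im * u * v)) := by
  rw [F, Complex.norm_exp]
  congr 1
  simp [Complex.add_re, Complex.mul_re, Complex.mul_im, Complex.I_re, Complex.I_im,
    ← Complex.ofReal_pow, Complex.ofReal_re, Complex.ofReal_im]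

lemma F_neg (τ₁ τ₂ τ₁₂ : ℂ) (u v : ℝ) : F τ₁ τ₂ τ₁₂ (-u) (-v) = F τ₁ τ₂ τ₁₂ u v := by
  unfold F; congr 1; push_cast; ring

lemma F_mul (τ₁ τ₂ τ₁₂ : ℂ) (u v u' v' a b a' b' : ℝ)
    (h1 : u + u' = 2*a) (h2 : v + v' = 2*b) (h3 : u - u' = 2*a') (h4 : v - v' = 2*b') :
    F τ₁ τ₂ τ₁₂ u v * F τ₁ τ₂ τ₁₂ u' v' =
      F (2*τ₁) (2*τ₂) (2*τ₁₂) a b * F (2*τ₁) (2*τ₂) (2*τ₁₂) a' b' := by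
  have hu : u = a + a' := by linarith
  have hu' : u' = a - a' := by linarith
  have hv : v = b + b' := by linarith
  have hv' : v' = b - b' := by linarith
  subst hu hu' hv hv'
  unfold F
  rw [← Complex.exp_add, ← Complex.exp_add]
  congr 1
  push_cast
  ring

lemma summable_one_dim {c : ℝ} (hc : 0 < c) (α : ℝ) :
    Summable fun m : ℤ => Real.exp (-c * ((m:ℝ) + α)^2) := by
  have h := summable_pow_mul_jacobiTheta₂_term_bound (c * |α| / Real.pi)
    (T := c / Real.pi) (by positivity) 0
  simp only [pow_zero, one_mul] at h
  refine h.of_nonneg_of_le (fun _ => (Real.exp_pos _).le) (fun n => ?_)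
  rw [Real.exp_le_exp]
  have hπ : (0:ℝ) < Real.pi := Real.pi_pos
  have h1 : (0:ℝ) ≤ α * (n:ℝ) + |α| * |(n:ℝ)| := by
    have := neg_abs_le (α * (n:ℝ))
    rw [abs_mul] at this
    linarith
  have h2 : Real.pi * (c/Real.pi * (n:ℝ)^2 - 2*(c*|α|/Real.pi) * ((|n| : ℤ) : ℝ))
      = c * (n:ℝ)^2 - 2*c*|α| * |(n:ℝ)| := by
    push_cast [Int.cast_abs]
    field_simp
  have h3 := mul_nonneg hc.le h1
  have h4 := mul_nonneg hc.le (sq_nonneg α)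
  nlinarith [h3, h4]

lemma summable_norm_F {τ₁ τ₂ τ₁₂ : ℂ} (hτ₁ : 0 < τ₁.im) (hτ₂ : 0 < τ₂.im)
    (hτ : τ₁₂.im^2 < τ₁.im * τ₂.im) (α β : ℝ) :
    Summable fun p : ℤ × ℤ => ‖F τ₁ τ₂ τ₁₂ ((p.1:ℝ) + α) ((p.2:ℝ) + β)‖ := by
  set y₁ := τ₁.im with hy₁
  set y₂ := τ₂.im with hy₂
  set y₁₂ := τ₁₂.im with hy₁₂
  set δ : ℝ := (y₁*y₂ - y₁₂^2)/(y₁+y₂) with hδdef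
  have hsum : 0 < y₁ + y₂ := by linarith
  have hδ : 0 < δ := div_pos (by nlinarith) hsum
  have key : ∀ u v : ℝ, δ*(u^2+v^2) ≤ y₁*u^2 + y₂*v^2 + 2*y₁₂*u*v := by
    intro u v
    rw [hδdef, div_mul_eq_mul_div, div_le_iff₀ hsum]
    nlinarith [sq_nonneg (y₁*u + y₁₂*v), sq_nonneg (y₁₂*u + y₂*v)]
  have hπδ : 0 < Real.pi * δ := by positivity
  have h1 := summable_one_dim hπδ α
  have h2 := summable_one_dim hπδ β
  have hprod := h1.mul_of_nonneg h2 (fun _ => (Real.exp_pos _).le)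
    (fun _ => (Real.exp_pos _).le)
  refine hprod.of_nonneg_of_le (fun _ => norm_nonneg _) (fun p => ?_)
  rw [norm_F, ← Real.exp_add, Real.exp_le_exp]
  have hk := key ((p.1:ℝ)+α) ((p.2:ℝ)+β)
  have := mul_le_mul_of_nonneg_left hk Real.pi_pos.le
  nlinarith

/-- The parity-class change of variables on `ℤ⁴`. -/
def χ : (Bool × Bool) × ((ℤ × ℤ) × (ℤ × ℤ)) ≃ (ℤ × ℤ) × (ℤ × ℤ) where
  toFun w :=
    if w.1.2 then
      ((-(w.2.1.1 + w.2.2.1 + (if w.1.1 then 1 else 0)), -(w.2.1.2 + w.2.2.2) - 1),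
        (-(w.2.1.1 - w.2.2.1), -(w.2.1.2 - w.2.2.2)))
    else
      ((w.2.1.1 + w.2.2.1 + (if w.1.1 then 1 else 0), w.2.1.2 + w.2.2.2),
        (w.2.1.1 - w.2.2.1, w.2.1.2 - w.2.2.2))
  invFun z :=
    if (z.1.2 + z.2.2) % 2 = 0 then
      (((if (z.1.1 + z.2.1) % 2 = 0 then false else true), false),
        ((z.1.1 + z.2.1 - (if (z.1.1 + z.2.1) % 2 = 0 then 0 else 1)) / 2,
          (z.1.2 + z.2.2) / 2),
        ((z.1.1 - z.2.1 - (if (z.1.1 + z.2.1) % 2 = 0 then 0 else 1)) / 2,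
          (z.1.2 - z.2.2) / 2))
    else
      (((if (z.1.1 + z.2.1) % 2 = 0 then false else true), true),
        ((-(z.1.1 + z.2.1) - (if (z.1.1 + z.2.1) % 2 = 0 then (0:ℤ) else 1)) / 2,
          (-(z.1.2 + z.2.2) - 1) / 2),
        ((-(z.1.1 - z.2.1) - (if (z.1.1 + z.2.1) % 2 = 0 then (0:ℤ) else 1)) / 2,
          (-(z.1.2 - z.2.2) - 1) / 2))
  left_inv := by
    rintro ⟨⟨b₁, b₂⟩, ⟨p, q⟩, ⟨p', q'⟩⟩
    cases b₁ <;> cases b₂ <;>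
      simp only [ite_true, ite_false, Bool.false_eq_true, if_false, if_true] <;>
      split_ifs <;>
        first
          | (exfalso; omega)
          | (simp only [Prod.mk.injEq, and_self, true_and, and_true]; omega)
  right_inv := by
    rintro ⟨⟨m, n⟩, ⟨m', n'⟩⟩
    by_cases h₂ : (n + n') % 2 = 0 <;> by_cases h₁ : (m + m') % 2 = 0 <;>
      simp only [h₁, h₂, if_true, if_false, ite_true, ite_false, if_pos, if_neg,
        not_false_iff, Bool.false_eq_true, Bool.true_eq_false,
        Prod.mk.injEq, and_self, true_and, and_true] <;>
      omega


lemma χ_ff (p q p' q' : ℤ) :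
    χ ((false, false), ((p, q), (p', q'))) = ((p + p', q + q'), (p - p', q - q')) := by
  simp [χ]

lemma χ_tf (p q p' q' : ℤ) :
    χ ((true, false), ((p, q), (p', q'))) = ((p + p' + 1, q + q'), (p - p', q - q')) := by
  simp [χ]

lemma χ_ft (p q p' q' : ℤ) :
    χ ((false, true), ((p, q), (p', q'))) =
      ((-(p + p'), -(q + q') - 1), (-(p - p'), -(q - q'))) := by
  simp [χ]

lemma χ_tt (p q p' q' : ℤ) :
    χ ((true, true), ((p, q), (p', q'))) =
      ((-(p + p' + 1), -(q + q') - 1), (-(p - p'), -(q - q'))) := by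
  simp [χ]

lemma theta_eq_tsum_F (τ₁ τ₂ τ₁₂ : ℂ) (a c : ℝ) :
    theta τ₁ τ₂ τ₁₂ a c 0 0 0 0 =
      ∑' p : ℤ × ℤ, F τ₁ τ₂ τ₁₂ ((p.1 : ℝ) + a / 2) ((p.2 : ℝ) + c / 2) := by
  unfold theta F
  refine tsum_congr fun p => ?_
  congr 1
  push_cast
  ring

lemma theta_eq_tsum_F_sign (τ₁ τ₂ τ₁₂ : ℂ) (c : ℝ) :
    theta τ₁ τ₂ τ₁₂ 0 c 1 0 0 0 =
      ∑' p : ℤ × ℤ, (-1 : ℂ) ^ p.1 * F τ₁ τ₂ τ₁₂ (p.1 : ℝ) ((p.2 : ℝ) + c / 2) := by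
  unfold theta F
  refine tsum_congr fun p => ?_
  have h : (Real.pi : ℂ) * Complex.I *
        (τ₁ * ((p.1 : ℂ) + ((0:ℝ) : ℂ) / 2) ^ 2 + τ₂ * ((p.2 : ℂ) + (c : ℂ) / 2) ^ 2 +
          2 * τ₁₂ * ((p.1 : ℂ) + ((0:ℝ) : ℂ) / 2) * ((p.2 : ℂ) + (c : ℂ) / 2)) +
        2 * (Real.pi : ℂ) * Complex.I *
          (((p.1 : ℂ) + ((0:ℝ) : ℂ) / 2) * (0 + ((1:ℝ) : ℂ) / 2) +
            ((p.2 : ℂ) + (c : ℂ) / 2) * (0 + ((0:ℝ) : ℂ) / 2))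
      = (p.1 : ℂ) * ((Real.pi : ℂ) * Complex.I) +
        (Real.pi : ℂ) * Complex.I *
          (τ₁ * (((p.1 : ℝ) : ℂ))^2 + τ₂ * ((((p.2 : ℝ) + c / 2 : ℝ)) : ℂ)^2 +
            2 * τ₁₂ * (((p.1 : ℝ)) : ℂ) * ((((p.2 : ℝ) + c / 2 : ℝ)) : ℂ)) := by
    push_cast
    ring
  rw [h, Complex.exp_add, Complex.exp_int_mul, Complex.exp_pi_mul_I]

noncomputable def G (τ₁ τ₂ τ₁₂ : ℂ) : Bool → ℤ × ℤ → ℂ := fun b P =>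
  if b then F (2*τ₁) (2*τ₂) (2*τ₁₂) ((P.1 : ℝ) + 1/2) ((P.2 : ℝ) + 1/4)
  else F (2*τ₁) (2*τ₂) (2*τ₁₂) (P.1 : ℝ) ((P.2 : ℝ) + 1/4)

end G2Aux

open G2Aux in
theorem half_characteristic_constants_BA (τ₁ τ₂ τ₁₂ : ℂ)
    (hτ₁ : 0 < τ₁.im) (hτ₂ : 0 < τ₂.im) (hτ : τ₁₂.im ^ 2 < τ₁.im * τ₂.im) :
    theta τ₁ τ₂ τ₁₂ 0 1 0 0 0 0 * theta τ₁ τ₂ τ₁₂ 0 0 0 0 0 0 =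
        2 * (Theta2 τ₁ τ₂ τ₁₂ 0 (1/2) 0 0 0 0 ^ 2 +
          Theta2 τ₁ τ₂ τ₁₂ 1 (1/2) 0 0 0 0 ^ 2) ∧
      theta τ₁ τ₂ τ₁₂ 0 1 1 0 0 0 * theta τ₁ τ₂ τ₁₂ 0 0 1 0 0 0 =
        2 * (Theta2 τ₁ τ₂ τ₁₂ 0 (1/2) 0 0 0 0 ^ 2 -
          Theta2 τ₁ τ₂ τ₁₂ 1 (1/2) 0 0 0 0 ^ 2) := by
  have h2i1 : ((2:ℂ) * τ₁).im = 2 * τ₁.im := by simp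
  have h2i2 : ((2:ℂ) * τ₂).im = 2 * τ₂.im := by simp
  have h2i12 : ((2:ℂ) * τ₁₂).im = 2 * τ₁₂.im := by simp
  have h2τ₁ : 0 < (2*τ₁ : ℂ).im := by rw [h2i1]; linarith
  have h2τ₂ : 0 < (2*τ₂ : ℂ).im := by rw [h2i2]; linarith
  have h2τ : (2*τ₁₂ : ℂ).im ^ 2 < (2*τ₁ : ℂ).im * (2*τ₂ : ℂ).im := by
    rw [h2i1, h2i2, h2i12]; nlinarith
  have smF := summable_norm_F hτ₁ hτ₂ hτ
  have smF2 := summable_norm_F h2τ₁ h2τ₂ h2τ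
  have sA1 : Summable fun p : ℤ×ℤ => ‖F τ₁ τ₂ τ₁₂ (p.1:ℝ) ((p.2:ℝ) + 1/2)‖ :=
    (smF 0 (1/2)).congr fun p => by norm_num
  have sA0 : Summable fun p : ℤ×ℤ => ‖F τ₁ τ₂ τ₁₂ (p.1:ℝ) (p.2:ℝ)‖ :=
    (smF 0 0).congr fun p => by norm_num
  have sC : Summable fun p : ℤ×ℤ => ‖F (2*τ₁) (2*τ₂) (2*τ₁₂) (p.1:ℝ) ((p.2:ℝ) + 1/4)‖ :=
    (smF2 0 (1/4)).congr fun p => by norm_num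
  have sD : Summable fun p : ℤ×ℤ =>
      ‖F (2*τ₁) (2*τ₂) (2*τ₁₂) ((p.1:ℝ) + 1/2) ((p.2:ℝ) + 1/4)‖ := smF2 (1/2) (1/4)
  have hnorm1 : ∀ p : ℤ×ℤ, ‖F τ₁ τ₂ τ₁₂ (p.1:ℝ) ((p.2:ℝ) + 1/2)‖ =
      ‖(-1:ℂ)^p.1 * F τ₁ τ₂ τ₁₂ (p.1:ℝ) ((p.2:ℝ) + 1/2)‖ := by
    intro p; rw [norm_mul]; simp
  have hnorm0 : ∀ p : ℤ×ℤ, ‖F τ₁ τ₂ τ₁₂ (p.1:ℝ) (p.2:ℝ)‖ =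
      ‖(-1:ℂ)^p.1 * F τ₁ τ₂ τ₁₂ (p.1:ℝ) (p.2:ℝ)‖ := by
    intro p; rw [norm_mul]; simp
  have sB1 : Summable fun p : ℤ×ℤ =>
      ‖(-1:ℂ)^p.1 * F τ₁ τ₂ τ₁₂ (p.1:ℝ) ((p.2:ℝ) + 1/2)‖ := sA1.congr hnorm1
  have sB0 : Summable fun p : ℤ×ℤ =>
      ‖(-1:ℂ)^p.1 * F τ₁ τ₂ τ₁₂ (p.1:ℝ) (p.2:ℝ)‖ := sA0.congr hnorm0
  -- series identifications
  have hA1 : theta τ₁ τ₂ τ₁₂ 0 1 0 0 0 0 =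
      ∑' p : ℤ×ℤ, F τ₁ τ₂ τ₁₂ (p.1:ℝ) ((p.2:ℝ) + 1/2) := by
    rw [theta_eq_tsum_F]; exact tsum_congr fun p => by norm_num
  have hA0 : theta τ₁ τ₂ τ₁₂ 0 0 0 0 0 0 =
      ∑' p : ℤ×ℤ, F τ₁ τ₂ τ₁₂ (p.1:ℝ) (p.2:ℝ) := by
    rw [theta_eq_tsum_F]; exact tsum_congr fun p => by norm_num
  have hC : Theta2 τ₁ τ₂ τ₁₂ 0 (1/2) 0 0 0 0 =
      ∑' p : ℤ×ℤ, F (2*τ₁) (2*τ₂) (2*τ₁₂) (p.1:ℝ) ((p.2:ℝ) + 1/4) := by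
    rw [Theta2, theta_eq_tsum_F]; exact tsum_congr fun p => by norm_num
  have hD : Theta2 τ₁ τ₂ τ₁₂ 1 (1/2) 0 0 0 0 =
      ∑' p : ℤ×ℤ, F (2*τ₁) (2*τ₂) (2*τ₁₂) ((p.1:ℝ) + 1/2) ((p.2:ℝ) + 1/4) := by
    rw [Theta2, theta_eq_tsum_F]; exact tsum_congr fun p => by norm_num
  have hB1 : theta τ₁ τ₂ τ₁₂ 0 1 1 0 0 0 =
      ∑' p : ℤ×ℤ, (-1:ℂ)^p.1 * F τ₁ τ₂ τ₁₂ (p.1:ℝ) ((p.2:ℝ) + 1/2) := by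
    rw [theta_eq_tsum_F_sign]
  have hB0 : theta τ₁ τ₂ τ₁₂ 0 0 1 0 0 0 =
      ∑' p : ℤ×ℤ, (-1:ℂ)^p.1 * F τ₁ τ₂ τ₁₂ (p.1:ℝ) (p.2:ℝ) := by
    rw [theta_eq_tsum_F_sign]; exact tsum_congr fun p => by norm_num
  -- term identities
  have hterm1 : ∀ w : (Bool×Bool)×((ℤ×ℤ)×(ℤ×ℤ)),
      F τ₁ τ₂ τ₁₂ ((χ w).1.1:ℝ) (((χ w).1.2:ℝ) + 1/2) *
        F τ₁ τ₂ τ₁₂ ((χ w).2.1:ℝ) ((χ w).2.2:ℝ)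
      = G τ₁ τ₂ τ₁₂ w.1.1 w.2.1 * G τ₁ τ₂ τ₁₂ w.1.1 w.2.2 := by
    rintro ⟨⟨b₁, b₂⟩, ⟨⟨p, q⟩, ⟨p', q'⟩⟩⟩
    cases b₁ <;> cases b₂ <;>
      simp only [χ_ff, χ_tf, χ_ft, χ_tt, G, Bool.false_eq_true, if_false, if_true,
        ite_true, ite_false]
    · exact F_mul _ _ _ _ _ _ _ _ _ _ _ (by push_cast; ring) (by push_cast; ring)
        (by push_cast; ring) (by push_cast; ring)
    · rw [← F_neg (2*τ₁) (2*τ₂) (2*τ₁₂) (p:ℝ) ((q:ℝ) + 1/4),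
        ← F_neg (2*τ₁) (2*τ₂) (2*τ₁₂) (p':ℝ) ((q':ℝ) + 1/4)]
      exact F_mul _ _ _ _ _ _ _ _ _ _ _ (by push_cast; ring) (by push_cast; ring)
        (by push_cast; ring) (by push_cast; ring)
    · exact F_mul _ _ _ _ _ _ _ _ _ _ _ (by push_cast; ring) (by push_cast; ring)
        (by push_cast; ring) (by push_cast; ring)
    · rw [← F_neg (2*τ₁) (2*τ₂) (2*τ₁₂) ((p:ℝ) + 1/2) ((q:ℝ) + 1/4),
        ← F_neg (2*τ₁) (2*τ₂) (2*τ₁₂) ((p':ℝ) + 1/2) ((q':ℝ) + 1/4)]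
      exact F_mul _ _ _ _ _ _ _ _ _ _ _ (by push_cast; ring) (by push_cast; ring)
        (by push_cast; ring) (by push_cast; ring)
  have hne : (-1:ℂ) ≠ 0 := by norm_num
  have hterm2 : ∀ w : (Bool×Bool)×((ℤ×ℤ)×(ℤ×ℤ)),
      ((-1:ℂ)^(χ w).1.1 * F τ₁ τ₂ τ₁₂ ((χ w).1.1:ℝ) (((χ w).1.2:ℝ) + 1/2)) *
        ((-1:ℂ)^(χ w).2.1 * F τ₁ τ₂ τ₁₂ ((χ w).2.1:ℝ) ((χ w).2.2:ℝ))
      = (if w.1.1 then (-1:ℂ) else 1) *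
          (G τ₁ τ₂ τ₁₂ w.1.1 w.2.1 * G τ₁ τ₂ τ₁₂ w.1.1 w.2.2) := by
    intro w
    rw [mul_mul_mul_comm]
    congr 1
    · obtain ⟨⟨b₁, b₂⟩, ⟨⟨p, q⟩, ⟨p', q'⟩⟩⟩ := w
      cases b₁ <;> cases b₂ <;>
        simp only [χ_ff, χ_tf, χ_ft, χ_tt, Bool.false_eq_true, if_false, if_true,
          ite_true, ite_false] <;>
        rw [← zpow_add₀ hne]
      · rw [show p + p' + (p - p') = 2*p by ring, zpow_mul]; norm_num
      · rw [show -(p + p') + -(p - p') = 2*(-p) by ring, zpow_mul]; norm_num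
      · rw [show p + p' + 1 + (p - p') = 2*p + 1 by ring, zpow_add₀ hne, zpow_mul]
        norm_num
      · rw [show -(p + p' + 1) + -(p - p') = 2*(-p) + (-1) by ring, zpow_add₀ hne,
          zpow_mul]
        norm_num
    · exact hterm1 w
  -- summability on the class side
  have big1 : Summable (fun z : (ℤ×ℤ)×(ℤ×ℤ) =>
      F τ₁ τ₂ τ₁₂ (z.1.1:ℝ) ((z.1.2:ℝ) + 1/2) * F τ₁ τ₂ τ₁₂ (z.2.1:ℝ) (z.2.2:ℝ)) :=
    (sA1.mul_norm sA0).of_norm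
  have big2 : Summable (fun z : (ℤ×ℤ)×(ℤ×ℤ) =>
      ((-1:ℂ)^z.1.1 * F τ₁ τ₂ τ₁₂ (z.1.1:ℝ) ((z.1.2:ℝ) + 1/2)) *
        ((-1:ℂ)^z.2.1 * F τ₁ τ₂ τ₁₂ (z.2.1:ℝ) (z.2.2:ℝ))) :=
    (sB1.mul_norm sB0).of_norm
  have sG1 : Summable fun w : (Bool×Bool)×((ℤ×ℤ)×(ℤ×ℤ)) =>
      G τ₁ τ₂ τ₁₂ w.1.1 w.2.1 * G τ₁ τ₂ τ₁₂ w.1.1 w.2.2 :=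
    ((χ.summable_iff).mpr big1).congr hterm1
  have sG2 : Summable fun w : (Bool×Bool)×((ℤ×ℤ)×(ℤ×ℤ)) =>
      (if w.1.1 then (-1:ℂ) else 1) *
        (G τ₁ τ₂ τ₁₂ w.1.1 w.2.1 * G τ₁ τ₂ τ₁₂ w.1.1 w.2.2) :=
    ((χ.summable_iff).mpr big2).congr hterm2
  -- inner product sums
  have e3 : ∀ b : Bool, (∑' z : (ℤ×ℤ)×(ℤ×ℤ), G τ₁ τ₂ τ₁₂ b z.1 * G τ₁ τ₂ τ₁₂ b z.2)
      = (∑' P : ℤ×ℤ, G τ₁ τ₂ τ₁₂ b P) * (∑' P : ℤ×ℤ, G τ₁ τ₂ τ₁₂ b P) := by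
    intro b
    cases b
    · simp only [G, Bool.false_eq_true, if_false, ite_false]
      exact (tsum_mul_tsum_of_summable_norm sC sC).symm
    · simp only [G, if_true, ite_true]
      exact (tsum_mul_tsum_of_summable_norm sD sD).symm
  have key1 : (∑' p : ℤ×ℤ, F τ₁ τ₂ τ₁₂ (p.1:ℝ) ((p.2:ℝ) + 1/2)) *
      (∑' p : ℤ×ℤ, F τ₁ τ₂ τ₁₂ (p.1:ℝ) (p.2:ℝ))
      = 2 * ((∑' P : ℤ×ℤ, G τ₁ τ₂ τ₁₂ false P) * (∑' P : ℤ×ℤ, G τ₁ τ₂ τ₁₂ false P) +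
          (∑' P : ℤ×ℤ, G τ₁ τ₂ τ₁₂ true P) * (∑' P : ℤ×ℤ, G τ₁ τ₂ τ₁₂ true P)) := by
    rw [tsum_mul_tsum_of_summable_norm sA1 sA0, ← Equiv.tsum_eq χ, tsum_congr hterm1,
      Summable.tsum_prod sG1, tsum_fintype]
    rw [Fintype.sum_prod_type]
    simp only [Fintype.sum_bool]
    rw [e3 true, e3 false]
    ring
  have key2 : (∑' p : ℤ×ℤ, (-1:ℂ)^p.1 * F τ₁ τ₂ τ₁₂ (p.1:ℝ) ((p.2:ℝ) + 1/2)) *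
      (∑' p : ℤ×ℤ, (-1:ℂ)^p.1 * F τ₁ τ₂ τ₁₂ (p.1:ℝ) (p.2:ℝ))
      = 2 * ((∑' P : ℤ×ℤ, G τ₁ τ₂ τ₁₂ false P) * (∑' P : ℤ×ℤ, G τ₁ τ₂ τ₁₂ false P) -
          (∑' P : ℤ×ℤ, G τ₁ τ₂ τ₁₂ true P) * (∑' P : ℤ×ℤ, G τ₁ τ₂ τ₁₂ true P)) := by
    rw [tsum_mul_tsum_of_summable_norm sB1 sB0, ← Equiv.tsum_eq χ, tsum_congr hterm2,
      Summable.tsum_prod sG2, tsum_fintype]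
    rw [Fintype.sum_prod_type]
    simp only [Fintype.sum_bool, if_true, ite_true, Bool.false_eq_true, if_false,
      ite_false, tsum_mul_left, one_mul, neg_one_mul, tsum_neg]
    rw [e3 true, e3 false]
    ring
  have hCG : (∑' P : ℤ×ℤ, G τ₁ τ₂ τ₁₂ false P)
      = ∑' p : ℤ×ℤ, F (2*τ₁) (2*τ₂) (2*τ₁₂) (p.1:ℝ) ((p.2:ℝ) + 1/4) := by
    refine tsum_congr fun p => ?_
    simp only [G, Bool.false_eq_true, if_false, ite_false]
  have hDG : (∑' P : ℤ×ℤ, G τ₁ τ₂ τ₁₂ true P)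
      = ∑' p : ℤ×ℤ, F (2*τ₁) (2*τ₂) (2*τ₁₂) ((p.1:ℝ) + 1/2) ((p.2:ℝ) + 1/4) := by
    refine tsum_congr fun p => ?_
    simp only [G, if_true, ite_true]
  constructor
  · rw [hA1, hA0, hC, hD, key1, hCG, hDG]; ring
  · rw [hB1, hB0, hC, hD, key2, hCG, hDG]; ring
end

section
/- Half-characteristic constants relations connecting the C sector with the A sector: θ[1,0;0,0](0,0) · θ[0,0;0,0](0,0) = 2 · ( Θ[1/2,0;0,0](0,0)² + Θ[1/2,1;0,0](0,0)² ) and θ[1,0;0,1](0,0) · θ[0,0;0,1](0,0) = 2 · ( Θ[1/2,0;0,0](0,0)² − Θ[1/2,1;0,0](0,0)² ). -/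
open Complex

namespace ThetaCA

/-- The summand of `theta` at `x = y = 0`. -/
noncomputable def Tm (τ₁ τ₂ τ₁₂ : ℂ) (a c b d : ℝ) (p : ℤ × ℤ) : ℂ :=
  Complex.exp
      ((Real.pi : ℂ) * Complex.I *
          (τ₁ * ((p.1 : ℂ) + (a : ℂ) / 2) ^ 2 + τ₂ * ((p.2 : ℂ) + (c : ℂ) / 2) ^ 2 +
            2 * τ₁₂ * ((p.1 : ℂ) + (a : ℂ) / 2) * ((p.2 : ℂ) + (c : ℂ) / 2)) +
        2 * (Real.pi : ℂ) * Complex.I *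
          (((p.1 : ℂ) + (a : ℂ) / 2) * (0 + (b : ℂ) / 2) +
            ((p.2 : ℂ) + (c : ℂ) / 2) * (0 + (d : ℂ) / 2)))

lemma theta_zero (τ₁ τ₂ τ₁₂ : ℂ) (a c b d : ℝ) :
    theta τ₁ τ₂ τ₁₂ a c b d 0 0 = ∑' p : ℤ × ℤ, Tm τ₁ τ₂ τ₁₂ a c b d p := rfl

lemma norm_Tm (τ₁ τ₂ τ₁₂ : ℂ) (a c b d : ℝ) (p : ℤ × ℤ) :
    ‖Tm τ₁ τ₂ τ₁₂ a c b d p‖ =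
      Real.exp (-Real.pi * (τ₁.im * ((p.1 : ℝ) + a / 2) ^ 2 + τ₂.im * ((p.2 : ℝ) + c / 2) ^ 2 +
        2 * τ₁₂.im * ((p.1 : ℝ) + a / 2) * ((p.2 : ℝ) + c / 2))) := by
  rw [Tm, Complex.norm_exp]
  congr 1
  rw [show ((Real.pi : ℂ) * Complex.I *
          (τ₁ * ((p.1 : ℂ) + (a : ℂ) / 2) ^ 2 + τ₂ * ((p.2 : ℂ) + (c : ℂ) / 2) ^ 2 +
            2 * τ₁₂ * ((p.1 : ℂ) + (a : ℂ) / 2) * ((p.2 : ℂ) + (c : ℂ) / 2)) +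
        2 * (Real.pi : ℂ) * Complex.I *
          (((p.1 : ℂ) + (a : ℂ) / 2) * (0 + (b : ℂ) / 2) +
            ((p.2 : ℂ) + (c : ℂ) / 2) * (0 + (d : ℂ) / 2))) =
      (((Real.pi * (((p.1 : ℝ) + a / 2) ^ 2) : ℝ) : ℂ) * τ₁ +
        ((Real.pi * (((p.2 : ℝ) + c / 2) ^ 2) : ℝ) : ℂ) * τ₂ +
        ((Real.pi * (2 * ((p.1 : ℝ) + a / 2) * ((p.2 : ℝ) + c / 2)) : ℝ) : ℂ) * τ₁₂ +
        ((Real.pi * (2 * (((p.1 : ℝ) + a / 2) * (b / 2) + ((p.2 : ℝ) + c / 2) * (d / 2))) : ℝ) :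
          ℂ)) * Complex.I from by push_cast; ring]
  rw [Complex.mul_I_re]
  simp only [Complex.add_im, Complex.im_ofReal_mul, Complex.ofReal_im]
  ring

lemma summable_gauss (k r : ℝ) (hk : 0 < k) :
    Summable fun n : ℤ => Real.exp (-(k * ((n : ℝ) + r) ^ 2)) := by
  have h := summable_pow_mul_jacobiTheta₂_term_bound (k * |r| / Real.pi)
    (T := k / Real.pi) (by positivity) 0
  refine Summable.of_nonneg_of_le (fun n => (Real.exp_pos _).le) (fun n => ?_) h
  rw [pow_zero, one_mul, Real.exp_le_exp]
  have h1 : -Real.pi * (k / Real.pi * (n : ℝ) ^ 2 - 2 * (k * |r| / Real.pi) * |(n : ℤ)|) =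
      -(k * (n : ℝ) ^ 2) + 2 * k * |r| * |(n : ℝ)| := by
    have hπ : Real.pi ≠ 0 := Real.pi_ne_zero
    push_cast
    field_simp
    ring
  rw [h1]
  have h2 : -((n : ℝ) * r) ≤ |(n : ℝ)| * |r| := by
    rw [← abs_mul]; exact neg_le_abs _
  nlinarith [hk.le, sq_nonneg r, abs_nonneg (n : ℝ), abs_nonneg r]

lemma summable_norm_Tm {τ₁ τ₂ τ₁₂ : ℂ} (h1 : 0 < τ₁.im) (h2 : 0 < τ₂.im)
    (h : τ₁₂.im ^ 2 < τ₁.im * τ₂.im) (a c b d : ℝ) :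
    Summable fun p : ℤ × ℤ => ‖Tm τ₁ τ₂ τ₁₂ a c b d p‖ := by
  set t₁ := τ₁.im with ht₁
  set t₂ := τ₂.im with ht₂
  set u := τ₁₂.im with hu
  set k : ℝ := (t₁ * t₂ - u ^ 2) / (2 * (t₁ + t₂)) with hkdef
  have hkpos : 0 < k := div_pos (by nlinarith) (by nlinarith)
  have key : ∀ X Y : ℝ, k * (X ^ 2 + Y ^ 2) ≤ t₁ * X ^ 2 + t₂ * Y ^ 2 + 2 * u * X * Y := by
    intro X Y
    rw [hkdef, div_mul_eq_mul_div, div_le_iff₀ (by nlinarith)]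
    nlinarith [sq_nonneg (t₁ * X + u * Y), sq_nonneg (t₂ * Y + u * X), sq_nonneg X, sq_nonneg Y]
  have hsum := (summable_gauss (Real.pi * k) (a / 2) (by positivity)).mul_of_nonneg
      (summable_gauss (Real.pi * k) (c / 2) (by positivity))
      (fun n => (Real.exp_pos _).le) (fun n => (Real.exp_pos _).le)
  refine Summable.of_nonneg_of_le (fun p => norm_nonneg _) (fun p => ?_) hsum
  rw [norm_Tm, ← Real.exp_add, Real.exp_le_exp]
  have hK := key ((p.1 : ℝ) + a / 2) ((p.2 : ℝ) + c / 2)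
  nlinarith [Real.pi_pos, mul_le_mul_of_nonneg_left hK Real.pi_pos.le]

/-- The reindexing equivalence. -/
def Ψ : ((Bool × Bool) × ((ℤ × ℤ) × (ℤ × ℤ))) ≃ ((ℤ × ℤ) × (ℤ × ℤ)) :=
  ⟨fun x => ((x.2.1.1 + x.2.2.1 + cond x.1.1 1 0, x.2.1.2 + x.2.2.2 + cond x.1.2 1 0),
      (x.2.1.1 - x.2.2.1, x.2.1.2 - x.2.2.2)),
    fun y => ((decide ((y.1.1 + y.2.1) % 2 = 1), decide ((y.1.2 + y.2.2) % 2 = 1)),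
      (((y.1.1 + y.2.1) / 2, (y.1.2 + y.2.2) / 2), ((y.1.1 - y.2.1) / 2, (y.1.2 - y.2.2) / 2))),
    by
      rintro ⟨⟨ε, δ⟩, ⟨⟨J, S⟩, ⟨K, T⟩⟩⟩
      cases ε <;> cases δ <;>
        simp only [cond_true, cond_false, Prod.mk.injEq, decide_eq_false_iff_not,
          decide_eq_true_eq] <;>
        omega,
    by
      rintro ⟨⟨m, n⟩, ⟨p, q⟩⟩
      by_cases h1 : (m + p) % 2 = 1 <;> by_cases h2 : (n + q) % 2 = 1 <;>
        simp only [h1, h2, decide_true, decide_false, cond_true, cond_false, Prod.mk.injEq] <;>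
        omega⟩

/-- The reflection equivalence used to relate the `a = 3/2` sum to the `a = 1/2` sum. -/
def R (δ : Bool) : (ℤ × ℤ) ≃ (ℤ × ℤ) :=
  ⟨fun y => (-1 - y.1, -y.2 - cond δ 1 0), fun y => (-1 - y.1, -y.2 - cond δ 1 0),
    by rintro ⟨J, S⟩; cases δ <;> simp <;> ring_nf,
    by rintro ⟨J, S⟩; cases δ <;> simp <;> ring_nf⟩


section Core

variable {τ₁ τ₂ τ₁₂ : ℂ}

set_option maxHeartbeats 3200000 in
private lemma core (hτ₁ : 0 < τ₁.im) (hτ₂ : 0 < τ₂.im)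
    (hτ : τ₁₂.im ^ 2 < τ₁.im * τ₂.im) (dd : Bool) :
    theta τ₁ τ₂ τ₁₂ 1 0 0 (cond dd 1 0) 0 0 * theta τ₁ τ₂ τ₁₂ 0 0 0 (cond dd 1 0) 0 0 =
      2 * (Theta2 τ₁ τ₂ τ₁₂ (1/2) 0 0 0 0 0 ^ 2 +
        (cond dd (-1 : ℂ) 1) * Theta2 τ₁ τ₂ τ₁₂ (1/2) 1 0 0 0 0 ^ 2) := by
  have h2 : ∀ z : ℂ, (2 * z).im = 2 * z.im := fun z => by
    rw [two_mul, Complex.add_im, two_mul]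
  have h2a : 0 < (2 * τ₁).im := by rw [h2]; linarith
  have h2b : 0 < (2 * τ₂).im := by rw [h2]; linarith
  have h2c : (2 * τ₁₂).im ^ 2 < (2 * τ₁).im * (2 * τ₂).im := by
    rw [h2, h2, h2]; nlinarith
  have hC : ∀ a c : ℝ, Summable fun p : ℤ × ℤ => ‖Tm (2*τ₁) (2*τ₂) (2*τ₁₂) a c 0 0 p‖ :=
    fun a c => summable_norm_Tm h2a h2b h2c a c 0 0
  have hf : Summable fun p : ℤ × ℤ => ‖Tm τ₁ τ₂ τ₁₂ 1 0 0 (cond dd 1 0) p‖ :=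
    summable_norm_Tm hτ₁ hτ₂ hτ _ _ _ _
  have hg : Summable fun p : ℤ × ℤ => ‖Tm τ₁ τ₂ τ₁₂ 0 0 0 (cond dd 1 0) p‖ :=
    summable_norm_Tm hτ₁ hτ₂ hτ _ _ _ _
  have key : ∀ (ε δ : Bool) (J S K T : ℤ),
      Tm τ₁ τ₂ τ₁₂ 1 0 0 (cond dd 1 0) (Ψ ((ε, δ), ((J, S), (K, T)))).1 *
        Tm τ₁ τ₂ τ₁₂ 0 0 0 (cond dd 1 0) (Ψ ((ε, δ), ((J, S), (K, T)))).2 =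
      (cond (dd && δ) (-1 : ℂ) 1) *
        (Tm (2*τ₁) (2*τ₂) (2*τ₁₂) (cond ε (3/2) (1/2)) (cond δ 1 0) 0 0 (J, S) *
          Tm (2*τ₁) (2*τ₂) (2*τ₁₂) (cond ε (3/2) (1/2)) (cond δ 1 0) 0 0 (K, T)) := by
    intro ε δ J S K T
    cases dd
    · cases ε <;> cases δ <;>
        · simp only [Ψ, Equiv.coe_fn_mk, Tm, cond_true, cond_false, Bool.and_true,
            Bool.and_false, Bool.false_and, Bool.true_and, one_mul, neg_one_mul]
          rw [← Complex.exp_add, ← Complex.exp_add]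
          exact Complex.exp_eq_exp_iff_exists_int.mpr ⟨0, by push_cast; ring⟩
    · cases ε <;> cases δ <;>
        · simp only [Ψ, Equiv.coe_fn_mk, Tm, cond_true, cond_false, Bool.and_true,
            Bool.and_false, Bool.false_and, Bool.true_and, one_mul, neg_one_mul]
          rw [← Complex.exp_add, ← Complex.exp_add]
          try rw [← Complex.exp_add_pi_mul_I]
          exact Complex.exp_eq_exp_iff_exists_int.mpr ⟨S, by push_cast; ring⟩
  have shift : ∀ δ : Bool,
      (∑' y : ℤ × ℤ, Tm (2*τ₁) (2*τ₂) (2*τ₁₂) (3/2) (cond δ 1 0) 0 0 y) =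
        ∑' y : ℤ × ℤ, Tm (2*τ₁) (2*τ₂) (2*τ₁₂) (1/2) (cond δ 1 0) 0 0 y := by
    intro δ
    rw [← Equiv.tsum_eq (R δ)]
    refine tsum_congr fun y => ?_
    rcases y with ⟨J, S⟩
    cases δ <;>
      · simp only [Tm, R, Equiv.coe_fn_mk, cond_true, cond_false]
        congr 1
        push_cast
        ring
  have hΨs : Summable (fun x : (Bool × Bool) × ((ℤ × ℤ) × (ℤ × ℤ)) =>
      Tm τ₁ τ₂ τ₁₂ 1 0 0 (cond dd 1 0) (Ψ x).1 * Tm τ₁ τ₂ τ₁₂ 0 0 0 (cond dd 1 0) (Ψ x).2) :=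
    (Equiv.summable_iff Ψ).mpr (summable_mul_of_summable_norm hf hg)
  have hfib : ∀ e : Bool × Bool, Summable (fun y : (ℤ × ℤ) × (ℤ × ℤ) =>
      Tm τ₁ τ₂ τ₁₂ 1 0 0 (cond dd 1 0) (Ψ (e, y)).1 *
        Tm τ₁ τ₂ τ₁₂ 0 0 0 (cond dd 1 0) (Ψ (e, y)).2) := by
    rintro ⟨ε, δ⟩
    refine Summable.congr
      (((summable_mul_of_summable_norm (hC (cond ε (3/2) (1/2)) (cond δ 1 0))
        (hC (cond ε (3/2) (1/2)) (cond δ 1 0))).mul_left (cond (dd && δ) (-1 : ℂ) 1))) ?_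
    rintro ⟨⟨J, S⟩, ⟨K, T⟩⟩
    exact (key ε δ J S K T).symm
  have hinner : ∀ ε δ : Bool,
      (∑' y : (ℤ × ℤ) × (ℤ × ℤ),
        Tm τ₁ τ₂ τ₁₂ 1 0 0 (cond dd 1 0) (Ψ ((ε, δ), y)).1 *
          Tm τ₁ τ₂ τ₁₂ 0 0 0 (cond dd 1 0) (Ψ ((ε, δ), y)).2) =
      (cond (dd && δ) (-1 : ℂ) 1) *
        (∑' y : ℤ × ℤ, Tm (2*τ₁) (2*τ₂) (2*τ₁₂) (1/2) (cond δ 1 0) 0 0 y) ^ 2 := by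
    intro ε δ
    have h1 : ∀ y : (ℤ × ℤ) × (ℤ × ℤ),
        Tm τ₁ τ₂ τ₁₂ 1 0 0 (cond dd 1 0) (Ψ ((ε, δ), y)).1 *
          Tm τ₁ τ₂ τ₁₂ 0 0 0 (cond dd 1 0) (Ψ ((ε, δ), y)).2 =
        (cond (dd && δ) (-1 : ℂ) 1) *
          (Tm (2*τ₁) (2*τ₂) (2*τ₁₂) (cond ε (3/2) (1/2)) (cond δ 1 0) 0 0 y.1 *
            Tm (2*τ₁) (2*τ₂) (2*τ₁₂) (cond ε (3/2) (1/2)) (cond δ 1 0) 0 0 y.2) := by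
      rintro ⟨⟨J, S⟩, ⟨K, T⟩⟩
      exact key ε δ J S K T
    rw [tsum_congr h1, tsum_mul_left,
      ← tsum_mul_tsum_of_summable_norm (hC (cond ε (3/2) (1/2)) (cond δ 1 0))
        (hC (cond ε (3/2) (1/2)) (cond δ 1 0)), ← sq]
    cases ε
    · simp only [cond_false]
    · simp only [cond_true]
      rw [shift δ]
  simp only [Theta2, theta_zero]
  rw [tsum_mul_tsum_of_summable_norm hf hg,
    show (∑' z : (ℤ × ℤ) × (ℤ × ℤ),
        Tm τ₁ τ₂ τ₁₂ 1 0 0 (cond dd 1 0) z.1 * Tm τ₁ τ₂ τ₁₂ 0 0 0 (cond dd 1 0) z.2) =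
      ∑' x : (Bool × Bool) × ((ℤ × ℤ) × (ℤ × ℤ)),
        Tm τ₁ τ₂ τ₁₂ 1 0 0 (cond dd 1 0) (Ψ x).1 * Tm τ₁ τ₂ τ₁₂ 0 0 0 (cond dd 1 0) (Ψ x).2
      from (Equiv.tsum_eq Ψ _).symm,
    hΨs.tsum_prod' hfib, tsum_fintype, Fintype.sum_prod_type, Fintype.sum_bool,
    Fintype.sum_bool, Fintype.sum_bool]
  simp only [hinner, Bool.and_true, Bool.and_false, cond_true, cond_false]
  ring

end Core

end ThetaCA

theorem half_characteristic_constants_CA (τ₁ τ₂ τ₁₂ : ℂ)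
    (hτ₁ : 0 < τ₁.im) (hτ₂ : 0 < τ₂.im) (hτ : τ₁₂.im ^ 2 < τ₁.im * τ₂.im) :
    theta τ₁ τ₂ τ₁₂ 1 0 0 0 0 0 * theta τ₁ τ₂ τ₁₂ 0 0 0 0 0 0 =
        2 * (Theta2 τ₁ τ₂ τ₁₂ (1/2) 0 0 0 0 0 ^ 2 +
          Theta2 τ₁ τ₂ τ₁₂ (1/2) 1 0 0 0 0 ^ 2) ∧
      theta τ₁ τ₂ τ₁₂ 1 0 0 1 0 0 * theta τ₁ τ₂ τ₁₂ 0 0 0 1 0 0 =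
        2 * (Theta2 τ₁ τ₂ τ₁₂ (1/2) 0 0 0 0 0 ^ 2 -
          Theta2 τ₁ τ₂ τ₁₂ (1/2) 1 0 0 0 0 ^ 2) := by
  constructor
  · have h := ThetaCA.core hτ₁ hτ₂ hτ false
    simp only [cond_false, one_mul] at h
    exact h
  · have h := ThetaCA.core hτ₁ hτ₂ hτ true
    simp only [cond_true, neg_one_mul, ← sub_eq_add_neg] at h
    exact h
end
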